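/- arXiv:2002.08686 — 9 statements merged into one kernel-verified Lean document; each statement's English description precedes it below -/
import Mathlib

section
/- In the free group F_5, the four commutators [λ_{2,5},λ_{1,4}], [λ_{2,5},λ_{1,3}], [λ_{3,5},λ_{1,4}], [λ_{3,5},λ_{2,4}] all lie in the normal closure of the set {S_i(λ_{2,4}λ_{1,3}λ_{2,4}^{-1}λ_{1,3}^{-1}) : i = 0,1,2,3} ∪ CR(4), where S_i : F_4 → F_5 and CR(4) ⊆ F_5 via the canonical inclusion F_4 → F_5. -/
/-- The ambient free group with generators `λ i j` indexed by ordered pairs of naturals;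
the sub-free-group `F_m` is spanned by the generators `lam i j` with `1 ≤ i ≠ j ≤ m`,
and the canonical inclusion `F_m → F_{m'}` is the identity on generators. -/
abbrev FG : Type := FreeGroup (ℕ × ℕ)

/-- The generator `λ_{i,j}`. -/
def lam (i j : ℕ) : FG := FreeGroup.of (i, j)

/-- The commutativity relators `λ_{i,j} λ_{k,l} λ_{i,j}⁻¹ λ_{k,l}⁻¹` of `VP_m`,
for pairwise distinct indices `1 ≤ i, j, k, l ≤ m`. -/
def CR (m : ℕ) : Set FG :=
  {w | ∃ i j k l : ℕ,
    1 ≤ i ∧ i ≤ m ∧ 1 ≤ j ∧ j ≤ m ∧ 1 ≤ k ∧ k ≤ m ∧ 1 ≤ l ∧ l ≤ m ∧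
    i ≠ j ∧ i ≠ k ∧ i ≠ l ∧ j ≠ k ∧ j ≠ l ∧ k ≠ l ∧
    w = lam i j * lam k l * (lam i j)⁻¹ * (lam k l)⁻¹}

/-- The long relators `λ_{k,i} λ_{k,j} λ_{i,j} λ_{k,i}⁻¹ λ_{k,j}⁻¹ λ_{i,j}⁻¹` of `VP_m`,
for pairwise distinct indices `1 ≤ i, j, k ≤ m`. -/
def LongR (m : ℕ) : Set FG :=
  {w | ∃ i j k : ℕ,
    1 ≤ i ∧ i ≤ m ∧ 1 ≤ j ∧ j ≤ m ∧ 1 ≤ k ∧ k ≤ m ∧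
    i ≠ j ∧ i ≠ k ∧ j ≠ k ∧
    w = lam k i * lam k j * lam i j * (lam k i)⁻¹ * (lam k j)⁻¹ * (lam i j)⁻¹}

/-- The full relator set `R^V(m)` of the virtual pure braid group `VP_m`. -/
def RV (m : ℕ) : Set FG := CR m ∪ LongR m

/-- Value of `S_{i-1}` on a generator, given by the displayed case formulas:
for `k < l`, `S_{i-1}(λ_{k,l})` and `S_{i-1}(λ_{l,k})` according to the position of `i`
relative to `k` and `l`. -/
def Sgen (i : ℕ) (p : ℕ × ℕ) : FG :=
  if p.1 < p.2 then
    -- the generator is `λ_{k,l}` with `k = p.1 < l = p.2`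
    if i < p.1 then lam (p.1 + 1) (p.2 + 1)
    else if i = p.1 then lam p.1 (p.2 + 1) * lam (p.1 + 1) (p.2 + 1)
    else if i < p.2 then lam p.1 (p.2 + 1)
    else if i = p.2 then lam p.1 (p.2 + 1) * lam p.1 p.2
    else lam p.1 p.2
  else if p.2 < p.1 then
    -- the generator is `λ_{l,k}` with `k = p.2 < l = p.1`
    if i < p.2 then lam (p.1 + 1) (p.2 + 1)
    else if i = p.2 then lam (p.1 + 1) (p.2 + 1) * lam (p.1 + 1) p.2
    else if i < p.1 then lam (p.1 + 1) p.2
    else if i = p.1 then lam p.1 p.2 * lam (p.1 + 1) p.2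
    else lam p.1 p.2
  else lam p.1 p.2

/-- The free-group homomorphism `S_t = S_{(t+1)-1} : F_m → F_{m+1}` (doubling the
`(t+1)`-st strand), determined on generators by the displayed case formulas. -/
def Smap (t : ℕ) : FG →* FG := FreeGroup.lift (Sgen (t + 1))

/-- The relator `u * v⁻¹` of a relation `u = v`. -/
def relOf (u v : FG) : FG := u * v⁻¹

/-- The set `R_{i,j,k}` of the six long relators with indices in `{i, j, k}`. -/
def Rtriple (i j k : ℕ) : Set FG :=
  {relOf (lam i j * lam i k * lam j k) (lam j k * lam i k * lam i j),
   relOf (lam j i * lam j k * lam i k) (lam i k * lam j k * lam j i),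
   relOf (lam i k * lam i j * lam k j) (lam k j * lam i j * lam i k),
   relOf (lam k i * lam k j * lam i j) (lam i j * lam k j * lam k i),
   relOf (lam j k * lam j i * lam k i) (lam k i * lam j i * lam j k),
   relOf (lam k j * lam k i * lam j i) (lam j i * lam k i * lam k j)}

/-- The commutator `[a,b] = a⁻¹ b⁻¹ a b`. -/
def commE (a b : FG) : FG := a⁻¹ * b⁻¹ * a * b

/-- The automorphism of the free group induced by a permutation of the indices:
`λ_{i,j} ↦ λ_{σ(i),σ(j)}`. -/
def permF (σ : Equiv.Perm ℕ) : FG →* FG :=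
  FreeGroup.lift (fun p => lam (σ p.1) (σ p.2))

/-- The relator `λ_{2,4} λ_{1,3} λ_{2,4}⁻¹ λ_{1,3}⁻¹` of `F_4`. -/
def r7 : FG := lam 2 4 * lam 1 3 * (lam 2 4)⁻¹ * (lam 1 3)⁻¹

/-- The normal closure in `F_5` of `{S_i(λ_{2,4}λ_{1,3}λ_{2,4}⁻¹λ_{1,3}⁻¹) : i = 0,1,2,3} ∪ CR(4)`. -/
def N7 : Subgroup FG :=
  Subgroup.normalClosure ({Smap 0 r7, Smap 1 r7, Smap 2 r7, Smap 3 r7} ∪ CR 4)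


lemma S0r7 : Smap 0 r7 =
    lam 3 5 * (lam 1 4 * lam 2 4) * (lam 3 5)⁻¹ * (lam 1 4 * lam 2 4)⁻¹ := by
  norm_num [Smap, r7, Sgen, lam, map_mul, map_inv]

lemma S1r7 : Smap 1 r7 =
    (lam 2 5 * lam 3 5) * lam 1 4 * (lam 2 5 * lam 3 5)⁻¹ * (lam 1 4)⁻¹ := by
  norm_num [Smap, r7, Sgen, lam, map_mul, map_inv]

lemma S2r7 : Smap 2 r7 =
    lam 2 5 * (lam 1 4 * lam 1 3) * (lam 2 5)⁻¹ * (lam 1 4 * lam 1 3)⁻¹ := by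
  norm_num [Smap, r7, Sgen, lam, map_mul, map_inv]

lemma S3r7 : Smap 3 r7 =
    (lam 2 5 * lam 2 4) * lam 1 3 * (lam 2 5 * lam 2 4)⁻¹ * (lam 1 3)⁻¹ := by
  norm_num [Smap, r7, Sgen, lam, map_mul, map_inv]

theorem comms_from_lifting_24_13 :
    commE (lam 2 5) (lam 1 4) ∈ N7 ∧ commE (lam 2 5) (lam 1 3) ∈ N7 ∧
    commE (lam 3 5) (lam 1 4) ∈ N7 ∧ commE (lam 3 5) (lam 2 4) ∈ N7 := by

  haveI : N7.Normal := Subgroup.normalClosure_normal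
  have hmem : ∀ x ∈ ({Smap 0 r7, Smap 1 r7, Smap 2 r7, Smap 3 r7} ∪ CR 4 : Set FG), x ∈ N7 :=
    fun x hx => Subgroup.subset_normalClosure hx
  set π := QuotientGroup.mk' N7 with hπ
  have hone : ∀ x ∈ N7, π x = 1 := fun x hx => (QuotientGroup.eq_one_iff x).mpr hx
  set a := π (lam 2 5) with ha
  set b := π (lam 3 5) with hb
  set c := π (lam 1 4) with hc
  set d := π (lam 1 3) with hd
  set e := π (lam 2 4) with he
  have h0 : b * (c * e) * b⁻¹ * (c * e)⁻¹ = 1 := by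
    have := hone _ (hmem ((Smap 0) r7) (Or.inl (by simp)))
    rw [S0r7] at this
    simpa [map_mul, map_inv, ← ha, ← hb, ← hc, ← hd, ← he, mul_assoc] using this
  have h1 : (a * b) * c * (a * b)⁻¹ * c⁻¹ = 1 := by
    have := hone _ (hmem ((Smap 1) r7) (Or.inl (by simp)))
    rw [S1r7] at this
    simpa [map_mul, map_inv, ← ha, ← hb, ← hc, ← hd, ← he, mul_assoc] using this
  have h2 : a * (c * d) * a⁻¹ * (c * d)⁻¹ = 1 := by
    have := hone _ (hmem ((Smap 2) r7) (Or.inl (by simp)))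
    rw [S2r7] at this
    simpa [map_mul, map_inv, ← ha, ← hb, ← hc, ← hd, ← he, mul_assoc] using this
  have h3 : (a * e) * d * (a * e)⁻¹ * d⁻¹ = 1 := by
    have := hone _ (hmem ((Smap 3) r7) (Or.inl (by simp)))
    rw [S3r7] at this
    simpa [map_mul, map_inv, ← ha, ← hb, ← hc, ← hd, ← he, mul_assoc] using this
  have hE : e * d * e⁻¹ * d⁻¹ = 1 := by
    have := hone _ (hmem r7 (Or.inr ⟨2, 4, 1, 3, by norm_num [r7]⟩))
    simp only [r7, map_mul, map_inv] at this
    exact this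
  -- derive commuting relations
  have hed : e * d = d * e := by rw [← one_mul (d * e), ← hE]; group
  have hD1 : a * e * d = d * (a * e) := by rw [← one_mul (d * (a * e)), ← h3]; group
  have had : a * d = d * a := by
    have h' : a * d * e = d * a * e := by
      calc a * d * e = a * (d * e) := by rw [mul_assoc]
        _ = a * (e * d) := by rw [hed]
        _ = a * e * d := by rw [mul_assoc]
        _ = d * (a * e) := hD1
        _ = d * a * e := by rw [mul_assoc]
    exact mul_right_cancel h'
  have hC1 : a * (c * d) = c * d * a := by rw [← one_mul (c * d * a), ← h2]; group
  have hac : a * c = c * a := by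
    have h' : a * c * d = c * a * d := by
      calc a * c * d = a * (c * d) := by rw [mul_assoc]
        _ = c * d * a := hC1
        _ = c * (d * a) := by rw [mul_assoc]
        _ = c * (a * d) := by rw [had]
        _ = c * a * d := by rw [mul_assoc]
    exact mul_right_cancel h'
  have hB1 : a * b * c = c * (a * b) := by rw [← one_mul (c * (a * b)), ← h1]; group
  have hbc : b * c = c * b := by
    have h' : a * (b * c) = a * (c * b) := by
      calc a * (b * c) = a * b * c := by rw [mul_assoc]
        _ = c * (a * b) := hB1
        _ = c * a * b := by rw [mul_assoc]
        _ = a * c * b := by rw [hac]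
        _ = a * (c * b) := by rw [mul_assoc]
    exact mul_left_cancel h'
  have hA1 : b * (c * e) = c * e * b := by rw [← one_mul (c * e * b), ← h0]; group
  have hbe : b * e = e * b := by
    have h' : c * (b * e) = c * (e * b) := by
      calc c * (b * e) = c * b * e := by rw [mul_assoc]
        _ = b * c * e := by rw [hbc]
        _ = b * (c * e) := by rw [mul_assoc]
        _ = c * e * b := hA1
        _ = c * (e * b) := by rw [mul_assoc]
    exact mul_left_cancel h'
  refine ⟨?_, ?_, ?_, ?_⟩ <;> rw [← QuotientGroup.eq_one_iff]
  · show π (commE (lam 2 5) (lam 1 4)) = 1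
    simp only [commE, map_mul, map_inv, ← ha, ← hc]
    rw [show a⁻¹ * c⁻¹ * a * c = (c * a)⁻¹ * (a * c) by group, hac]
    group
  · show π (commE (lam 2 5) (lam 1 3)) = 1
    simp only [commE, map_mul, map_inv, ← ha, ← hd]
    rw [show a⁻¹ * d⁻¹ * a * d = (d * a)⁻¹ * (a * d) by group, had]
    group
  · show π (commE (lam 3 5) (lam 1 4)) = 1
    simp only [commE, map_mul, map_inv, ← hb, ← hc]
    rw [show b⁻¹ * c⁻¹ * b * c = (c * b)⁻¹ * (b * c) by group, hbc]
    group
  · show π (commE (lam 3 5) (lam 2 4)) = 1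
    simp only [commE, map_mul, map_inv, ← hb, ← he]
    rw [show b⁻¹ * e⁻¹ * b * e = (e * b)⁻¹ * (b * e) by group, hbe]
    group
end

section
/- In the free group F_5, the four commutators [λ_{3,5},λ_{1,2}], [λ_{4,5},λ_{1,2}], [λ_{4,5},λ_{1,3}], [λ_{4,5},λ_{2,3}] all lie in the normal closure of the set {S_i(λ_{3,4}λ_{1,2}λ_{3,4}^{-1}λ_{1,2}^{-1}) : i = 0,1,2,3} ∪ {[λ_{2,5},λ_{1,4}], [λ_{2,5},λ_{1,3}], [λ_{3,5},λ_{1,4}], [λ_{3,5},λ_{2,4}]} ∪ CR(4), where S_i : F_4 → F_5 and CR(4) ⊆ F_5 via the canonical inclusion F_4 → F_5. -/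
/-- The relator `λ_{3,4} λ_{1,2} λ_{3,4}⁻¹ λ_{1,2}⁻¹` of `F_4`. -/
def r8 : FG := lam 3 4 * lam 1 2 * (lam 3 4)⁻¹ * (lam 1 2)⁻¹

/-- The normal closure in `F_5` of `{S_i(λ_{3,4}λ_{1,2}λ_{3,4}⁻¹λ_{1,2}⁻¹) : i = 0,1,2,3}`
together with the commutators `[λ_{2,5},λ_{1,4}], [λ_{2,5},λ_{1,3}], [λ_{3,5},λ_{1,4}],
[λ_{3,5},λ_{2,4}]` and `CR(4)`. -/
def N8 : Subgroup FG :=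
  Subgroup.normalClosure
    ({Smap 0 r8, Smap 1 r8, Smap 2 r8, Smap 3 r8} ∪
     {commE (lam 2 5) (lam 1 4), commE (lam 2 5) (lam 1 3),
      commE (lam 3 5) (lam 1 4), commE (lam 3 5) (lam 2 4)} ∪ CR 4)


lemma conj_fix {G : Type*} [Group G] {g x : G} (h : g * x * g⁻¹ = x) : g⁻¹ * x * g = x := by
  have h' : g * x = x * g := mul_inv_eq_iff_eq_mul.mp h
  calc g⁻¹ * x * g = g⁻¹ * (x * g) := by group
    _ = g⁻¹ * (g * x) := by rw [h']
    _ = x := by group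

lemma comm_one {G : Type*} [Group G] {a b : G} (h : a * b * a⁻¹ = b) :
    a⁻¹ * b⁻¹ * a * b = 1 := by
  have h' : a * b = b * a := mul_inv_eq_iff_eq_mul.mp h
  calc a⁻¹ * b⁻¹ * a * b = a⁻¹ * b⁻¹ * (a * b) := by group
    _ = a⁻¹ * b⁻¹ * (b * a) := by rw [h']
    _ = 1 := by group

lemma key8 {G : Type*} [Group G] (x12 x13 x23 x34 x35 x45 : G)
    (hc : x34 * x12 * x34⁻¹ = x12)
    (h0 : x45 * (x13 * x23) * x45⁻¹ = x13 * x23)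
    (h1 : x45 * (x13 * x12) * x45⁻¹ = x13 * x12)
    (h2 : (x35 * x45) * x12 * (x35 * x45)⁻¹ = x12)
    (h3 : (x35 * x34) * x12 * (x35 * x34)⁻¹ = x12) :
    x35 * x12 * x35⁻¹ = x12 ∧ x45 * x12 * x45⁻¹ = x12 ∧
    x45 * x13 * x45⁻¹ = x13 ∧ x45 * x23 * x45⁻¹ = x23 := by
  have e35 : x35 * x12 * x35⁻¹ = x12 := by
    calc x35 * x12 * x35⁻¹ = x35 * (x34 * x12 * x34⁻¹) * x35⁻¹ := by rw [hc]
      _ = (x35 * x34) * x12 * (x35 * x34)⁻¹ := by group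
      _ = x12 := h3
  have e45 : x45 * x12 * x45⁻¹ = x12 := by
    have h2' : x35 * (x45 * x12 * x45⁻¹) * x35⁻¹ = x12 := by
      calc x35 * (x45 * x12 * x45⁻¹) * x35⁻¹ = (x35 * x45) * x12 * (x35 * x45)⁻¹ := by group
        _ = x12 := h2
    calc x45 * x12 * x45⁻¹ = x35⁻¹ * (x35 * (x45 * x12 * x45⁻¹) * x35⁻¹) * x35 := by group
      _ = x35⁻¹ * x12 * x35 := by rw [h2']
      _ = x12 := conj_fix e35
  have e13 : x45 * x13 * x45⁻¹ = x13 := by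
    have h' : (x45 * x13 * x45⁻¹) * x12 = x13 * x12 := by
      calc (x45 * x13 * x45⁻¹) * x12 = (x45 * x13 * x45⁻¹) * (x45 * x12 * x45⁻¹) := by rw [e45]
        _ = x45 * (x13 * x12) * x45⁻¹ := by group
        _ = x13 * x12 := h1
    exact mul_right_cancel h'
  have e23 : x45 * x23 * x45⁻¹ = x23 := by
    have h' : x13 * (x45 * x23 * x45⁻¹) = x13 * x23 := by
      calc x13 * (x45 * x23 * x45⁻¹) = (x45 * x13 * x45⁻¹) * (x45 * x23 * x45⁻¹) := by rw [e13]
        _ = x45 * (x13 * x23) * x45⁻¹ := by group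
        _ = x13 * x23 := h0
    exact mul_left_cancel h'
  exact ⟨e35, e45, e13, e23⟩

lemma s0eq : Smap 0 r8 = lam 4 5 * (lam 1 3 * lam 2 3) * (lam 4 5)⁻¹ * (lam 1 3 * lam 2 3)⁻¹ := by
  simp [Smap, r8, lam, Sgen]
lemma s1eq : Smap 1 r8 = lam 4 5 * (lam 1 3 * lam 1 2) * (lam 4 5)⁻¹ * (lam 1 3 * lam 1 2)⁻¹ := by
  simp [Smap, r8, lam, Sgen]
lemma s2eq : Smap 2 r8 = (lam 3 5 * lam 4 5) * lam 1 2 * (lam 3 5 * lam 4 5)⁻¹ * (lam 1 2)⁻¹ := by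
  simp [Smap, r8, lam, Sgen]
lemma s3eq : Smap 3 r8 = (lam 3 5 * lam 3 4) * lam 1 2 * (lam 3 5 * lam 3 4)⁻¹ * (lam 1 2)⁻¹ := by
  simp [Smap, r8, lam, Sgen]

theorem comms_from_lifting_34_12 :
    commE (lam 3 5) (lam 1 2) ∈ N8 ∧ commE (lam 4 5) (lam 1 2) ∈ N8 ∧
    commE (lam 4 5) (lam 1 3) ∈ N8 ∧ commE (lam 4 5) (lam 2 3) ∈ N8 := by
  
  haveI inst : N8.Normal := Subgroup.normalClosure_normal
  have m0 : Smap 0 r8 ∈ N8 := Subgroup.subset_normalClosure (by left; left; simp)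
  have m1 : Smap 1 r8 ∈ N8 := Subgroup.subset_normalClosure (by left; left; simp)
  have m2 : Smap 2 r8 ∈ N8 := Subgroup.subset_normalClosure (by left; left; simp)
  have m3 : Smap 3 r8 ∈ N8 := Subgroup.subset_normalClosure (by left; left; simp)
  have mc : lam 3 4 * lam 1 2 * (lam 3 4)⁻¹ * (lam 1 2)⁻¹ ∈ N8 :=
    Subgroup.subset_normalClosure (Or.inr ⟨3, 4, 1, 2, by norm_num⟩)
  rw [s0eq] at m0; rw [s1eq] at m1; rw [s2eq] at m2; rw [s3eq] at m3
  have q0 := (QuotientGroup.eq_one_iff _).mpr m0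
  have q1 := (QuotientGroup.eq_one_iff _).mpr m1
  have q2 := (QuotientGroup.eq_one_iff _).mpr m2
  have q3 := (QuotientGroup.eq_one_iff _).mpr m3
  have qc := (QuotientGroup.eq_one_iff _).mpr mc
  simp only [QuotientGroup.mk_mul, QuotientGroup.mk_inv] at q0 q1 q2 q3 qc
  obtain ⟨e35, e45, e13, e23⟩ :=
    key8 ((lam 1 2 : FG) : FG ⧸ N8) ((lam 1 3 : FG) : FG ⧸ N8) ((lam 2 3 : FG) : FG ⧸ N8)
      ((lam 3 4 : FG) : FG ⧸ N8) ((lam 3 5 : FG) : FG ⧸ N8) ((lam 4 5 : FG) : FG ⧸ N8)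
      (mul_inv_eq_one.mp qc) (mul_inv_eq_one.mp q0) (mul_inv_eq_one.mp q1)
      (mul_inv_eq_one.mp q2) (mul_inv_eq_one.mp q3)
  refine ⟨?_, ?_, ?_, ?_⟩ <;>
    refine (QuotientGroup.eq_one_iff _).mp ?_ <;>
    simp only [commE, QuotientGroup.mk_mul, QuotientGroup.mk_inv]
  · exact comm_one e35
  · exact comm_one e45
  · exact comm_one e13
  · exact comm_one e23
end

section
/- In the free group F_5, the four commutators [λ_{1,5},λ_{3,2}], [λ_{1,5},λ_{4,2}], [λ_{1,5},λ_{4,3}], [λ_{2,5},λ_{4,3}] all lie in the normal closure of the set {S_i(λ_{1,4}λ_{3,2}λ_{1,4}^{-1}λ_{3,2}^{-1}) : i = 0,1,2,3} ∪ CR(4), where S_i : F_4 → F_5 and CR(4) ⊆ F_5 via the canonical inclusion F_4 → F_5. -/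
/-- The relator `λ_{1,4} λ_{3,2} λ_{1,4}⁻¹ λ_{3,2}⁻¹` of `F_4`. -/
def r9 : FG := lam 1 4 * lam 3 2 * (lam 1 4)⁻¹ * (lam 3 2)⁻¹

/-- The normal closure in `F_5` of `{S_i(λ_{1,4}λ_{3,2}λ_{1,4}⁻¹λ_{3,2}⁻¹) : i = 0,1,2,3} ∪ CR(4)`. -/
def N9 : Subgroup FG :=
  Subgroup.normalClosure ({Smap 0 r9, Smap 1 r9, Smap 2 r9, Smap 3 r9} ∪ CR 4)
section Helpers
variable {G : Type*} [Group G]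

lemma comm_of_rel {a b : G} (h : a * b * a⁻¹ * b⁻¹ = 1) : a * b = b * a := by
  have h1 : a * b * a⁻¹ = b := by rwa [mul_inv_eq_one] at h
  rwa [mul_inv_eq_iff_eq_mul] at h1

lemma conj_one {a x : G} (h : a * x * a⁻¹ = 1) : x = 1 := by
  have := congrArg (fun y => a⁻¹ * y * a) h
  simpa [mul_assoc] using this

lemma commE_one {a b : G} (h : a * b = b * a) : a⁻¹ * b⁻¹ * a * b = 1 := by
  rw [show a⁻¹ * b⁻¹ * a * b = a⁻¹ * b⁻¹ * (a * b) by group, h]; group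

lemma step1 {a f b : G} (h : a * f * b * f⁻¹ * a⁻¹ * b⁻¹ = 1) (hfb : f * b = b * f) :
    a * b = b * a := by
  apply comm_of_rel
  calc a * b * a⁻¹ * b⁻¹ = a * (f * b * f⁻¹) * a⁻¹ * b⁻¹ := by
        rw [hfb, mul_inv_cancel_right]
    _ = a * f * b * f⁻¹ * a⁻¹ * b⁻¹ := by group
    _ = 1 := h

lemma step2 {a b c : G} (h : a * b * c * a⁻¹ * c⁻¹ * b⁻¹ = 1) (hab : a * b = b * a) :
    a * c = c * a := by
  apply comm_of_rel
  apply conj_one (a := b)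
  calc b * (a * c * a⁻¹ * c⁻¹) * b⁻¹ = b * a * c * a⁻¹ * c⁻¹ * b⁻¹ := by group
    _ = a * b * c * a⁻¹ * c⁻¹ * b⁻¹ := by rw [hab]
    _ = 1 := h

lemma step3 {a c d : G} (h : a * d * c * a⁻¹ * c⁻¹ * d⁻¹ = 1) (hac : a * c = c * a) :
    a * d = d * a := by
  apply comm_of_rel
  have hcom : Commute a c := hac
  have hca : c * a⁻¹ = a⁻¹ * c := hcom.inv_left.eq.symm
  calc a * d * a⁻¹ * d⁻¹ = a * d * (a⁻¹ * c) * c⁻¹ * d⁻¹ := by group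
    _ = a * d * (c * a⁻¹) * c⁻¹ * d⁻¹ := by rw [hca]
    _ = a * d * c * a⁻¹ * c⁻¹ * d⁻¹ := by group
    _ = 1 := h

lemma step4 {a e d : G} (h : a * e * d * e⁻¹ * a⁻¹ * d⁻¹ = 1) (had : a * d = d * a) :
    e * d = d * e := by
  apply comm_of_rel
  apply conj_one (a := a)
  have hcom : Commute a d := had
  have hid : a⁻¹ * d⁻¹ = d⁻¹ * a⁻¹ := hcom.inv_inv.eq
  calc a * (e * d * e⁻¹ * d⁻¹) * a⁻¹ = a * e * d * e⁻¹ * (d⁻¹ * a⁻¹) := by group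
    _ = a * e * d * e⁻¹ * (a⁻¹ * d⁻¹) := by rw [hid]
    _ = a * e * d * e⁻¹ * a⁻¹ * d⁻¹ := by group
    _ = 1 := h

end Helpers

theorem comms_from_lifting_14_32 :
    commE (lam 1 5) (lam 3 2) ∈ N9 ∧ commE (lam 1 5) (lam 4 2) ∈ N9 ∧
    commE (lam 1 5) (lam 4 3) ∈ N9 ∧ commE (lam 2 5) (lam 4 3) ∈ N9 := by
  haveI : N9.Normal := Subgroup.normalClosure_normal
  set S : Set FG := {Smap 0 r9, Smap 1 r9, Smap 2 r9, Smap 3 r9} ∪ CR 4 with hS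
  let π : FG →* FG ⧸ N9 := QuotientGroup.mk' N9
  have key : ∀ x : FG, π x = 1 → x ∈ N9 := fun x hx =>
    (QuotientGroup.eq_one_iff x).1 hx
  have gen : ∀ x ∈ S, π x = 1 := fun x hx =>
    (QuotientGroup.eq_one_iff x).2 (Subgroup.subset_normalClosure hx)
  set A := π (lam 1 5) with hA
  set B := π (lam 3 2) with hB
  set C := π (lam 4 2) with hC
  set D := π (lam 4 3) with hD
  set E := π (lam 2 5) with hE
  set F := π (lam 1 4) with hF
  -- the four lifted relators
  have w3 : Smap 3 r9 = lam 1 5 * lam 1 4 * lam 3 2 * (lam 1 4)⁻¹ * (lam 1 5)⁻¹ * (lam 3 2)⁻¹ := by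
    simp only [Smap, r9, map_mul, map_inv, FreeGroup.lift_apply_of]
    norm_num [Sgen, lam]; group
  have w2 : Smap 2 r9 = lam 1 5 * lam 3 2 * lam 4 2 * (lam 1 5)⁻¹ * (lam 4 2)⁻¹ * (lam 3 2)⁻¹ := by
    simp only [Smap, r9, map_mul, map_inv, FreeGroup.lift_apply_of]
    norm_num [Sgen, lam]; group
  have w1 : Smap 1 r9 = lam 1 5 * lam 4 3 * lam 4 2 * (lam 1 5)⁻¹ * (lam 4 2)⁻¹ * (lam 4 3)⁻¹ := by
    simp only [Smap, r9, map_mul, map_inv, FreeGroup.lift_apply_of]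
    norm_num [Sgen, lam]; group
  have w0 : Smap 0 r9 = lam 1 5 * lam 2 5 * lam 4 3 * (lam 2 5)⁻¹ * (lam 1 5)⁻¹ * (lam 4 3)⁻¹ := by
    simp only [Smap, r9, map_mul, map_inv, FreeGroup.lift_apply_of]
    norm_num [Sgen, lam]; group
  have h3 : A * F * B * F⁻¹ * A⁻¹ * B⁻¹ = 1 := by
    have := gen (Smap 3 r9) (by left; simp)
    rw [w3] at this
    simpa only [map_mul, map_inv, hA, hB, hF] using this
  have h2 : A * B * C * A⁻¹ * C⁻¹ * B⁻¹ = 1 := by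
    have := gen (Smap 2 r9) (by left; simp)
    rw [w2] at this
    simpa only [map_mul, map_inv, hA, hB, hC] using this
  have h1 : A * D * C * A⁻¹ * C⁻¹ * D⁻¹ = 1 := by
    have := gen (Smap 1 r9) (by left; simp)
    rw [w1] at this
    simpa only [map_mul, map_inv, hA, hC, hD] using this
  have h0 : A * E * D * E⁻¹ * A⁻¹ * D⁻¹ = 1 := by
    have := gen (Smap 0 r9) (by left; simp)
    rw [w0] at this
    simpa only [map_mul, map_inv, hA, hD, hE] using this
  have hcr : F * B * F⁻¹ * B⁻¹ = 1 := by
    have := gen (lam 1 4 * lam 3 2 * (lam 1 4)⁻¹ * (lam 3 2)⁻¹)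
      (by right; exact ⟨1, 4, 3, 2, by norm_num⟩)
    simpa only [map_mul, map_inv, hB, hF] using this
  have hFB : F * B = B * F := comm_of_rel hcr
  have hAB : A * B = B * A := step1 h3 hFB
  have hAC : A * C = C * A := step2 h2 hAB
  have hAD : A * D = D * A := step3 h1 hAC
  have hED : E * D = D * E := step4 h0 hAD
  refine ⟨key _ ?_, key _ ?_, key _ ?_, key _ ?_⟩ <;>
    simp only [commE, map_mul, map_inv, ← hA, ← hB, ← hC, ← hD, ← hE]
  · exact commE_one hAB
  · exact commE_one hAC
  · exact commE_one hAD
  · exact commE_one hED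
end

section
/- In the free group F_5, the four commutators [λ_{2,5},λ_{3,1}], [λ_{2,5},λ_{4,1}], [λ_{3,5},λ_{4,1}], [λ_{3,5},λ_{4,2}] all lie in the normal closure of the set {S_i(λ_{2,4}λ_{3,1}λ_{2,4}^{-1}λ_{3,1}^{-1}) : i = 0,1,2,3} ∪ CR(4), where S_i : F_4 → F_5 and CR(4) ⊆ F_5 via the canonical inclusion F_4 → F_5. -/
/-- The relator `λ_{2,4} λ_{3,1} λ_{2,4}⁻¹ λ_{3,1}⁻¹` of `F_4`. -/
def r10 : FG := lam 2 4 * lam 3 1 * (lam 2 4)⁻¹ * (lam 3 1)⁻¹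

/-- The normal closure in `F_5` of `{S_i(λ_{2,4}λ_{3,1}λ_{2,4}⁻¹λ_{3,1}⁻¹) : i = 0,1,2,3} ∪ CR(4)`. -/
def N10 : Subgroup FG :=
  Subgroup.normalClosure ({Smap 0 r10, Smap 1 r10, Smap 2 r10, Smap 3 r10} ∪ CR 4)

lemma Smap0_r10 : Smap 0 r10 =
    lam 3 5 * (lam 4 2 * lam 4 1) * (lam 3 5)⁻¹ * (lam 4 2 * lam 4 1)⁻¹ := by
  simp [Smap, r10, Sgen, lam, map_mul, map_inv]

lemma Smap1_r10 : Smap 1 r10 =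
    (lam 2 5 * lam 3 5) * lam 4 1 * (lam 2 5 * lam 3 5)⁻¹ * (lam 4 1)⁻¹ := by
  simp [Smap, r10, Sgen, lam, map_mul, map_inv]

lemma Smap2_r10 : Smap 2 r10 =
    lam 2 5 * (lam 3 1 * lam 4 1) * (lam 2 5)⁻¹ * (lam 3 1 * lam 4 1)⁻¹ := by
  simp [Smap, r10, Sgen, lam, map_mul, map_inv]

lemma Smap3_r10 : Smap 3 r10 =
    (lam 2 5 * lam 2 4) * lam 3 1 * (lam 2 5 * lam 2 4)⁻¹ * (lam 3 1)⁻¹ := by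
  simp [Smap, r10, Sgen, lam, map_mul, map_inv]

theorem comms_from_lifting_24_31 :
    commE (lam 2 5) (lam 3 1) ∈ N10 ∧ commE (lam 2 5) (lam 4 1) ∈ N10 ∧
    commE (lam 3 5) (lam 4 1) ∈ N10 ∧ commE (lam 3 5) (lam 4 2) ∈ N10 := by
  have hnorm : (N10).Normal := Subgroup.normalClosure_normal
  have conj : ∀ x ∈ N10, ∀ g : FG, g * x * g⁻¹ ∈ N10 := fun x hx g => hnorm.conj_mem x hx g
  have hc : lam 2 4 * lam 3 1 * (lam 2 4)⁻¹ * (lam 3 1)⁻¹ ∈ N10 := by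
    apply Subgroup.subset_normalClosure
    exact Or.inr ⟨2, 4, 3, 1, by norm_num⟩
  have hr0 : lam 3 5 * (lam 4 2 * lam 4 1) * (lam 3 5)⁻¹ * (lam 4 2 * lam 4 1)⁻¹ ∈ N10 := by
    rw [← Smap0_r10]; exact Subgroup.subset_normalClosure (Or.inl (by simp))
  have hr1 : (lam 2 5 * lam 3 5) * lam 4 1 * (lam 2 5 * lam 3 5)⁻¹ * (lam 4 1)⁻¹ ∈ N10 := by
    rw [← Smap1_r10]; exact Subgroup.subset_normalClosure (Or.inl (by simp))
  have hr2 : lam 2 5 * (lam 3 1 * lam 4 1) * (lam 2 5)⁻¹ * (lam 3 1 * lam 4 1)⁻¹ ∈ N10 := by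
    rw [← Smap2_r10]; exact Subgroup.subset_normalClosure (Or.inl (by simp))
  have hr3 : (lam 2 5 * lam 2 4) * lam 3 1 * (lam 2 5 * lam 2 4)⁻¹ * (lam 3 1)⁻¹ ∈ N10 := by
    rw [← Smap3_r10]; exact Subgroup.subset_normalClosure (Or.inl (by simp))
  -- A = [λ25, λ31] (uvu⁻¹v⁻¹ form)
  have hA : lam 2 5 * lam 3 1 * (lam 2 5)⁻¹ * (lam 3 1)⁻¹ ∈ N10 := by
    have h : lam 2 5 * lam 3 1 * (lam 2 5)⁻¹ * (lam 3 1)⁻¹ =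
        (lam 2 5 * (lam 2 4 * lam 3 1 * (lam 2 4)⁻¹ * (lam 3 1)⁻¹) * (lam 2 5)⁻¹)⁻¹ *
        ((lam 2 5 * lam 2 4) * lam 3 1 * (lam 2 5 * lam 2 4)⁻¹ * (lam 3 1)⁻¹) := by group
    rw [h]; exact mul_mem (inv_mem (conj _ hc _)) hr3
  have hB : lam 2 5 * lam 4 1 * (lam 2 5)⁻¹ * (lam 4 1)⁻¹ ∈ N10 := by
    have h : lam 2 5 * lam 4 1 * (lam 2 5)⁻¹ * (lam 4 1)⁻¹ =
        (lam 3 1)⁻¹ * ((lam 2 5 * lam 3 1 * (lam 2 5)⁻¹ * (lam 3 1)⁻¹)⁻¹ *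
        (lam 2 5 * (lam 3 1 * lam 4 1) * (lam 2 5)⁻¹ * (lam 3 1 * lam 4 1)⁻¹)) * ((lam 3 1)⁻¹)⁻¹ := by
      group
    rw [h]; exact conj _ (mul_mem (inv_mem hA) hr2) _
  have hC : lam 3 5 * lam 4 1 * (lam 3 5)⁻¹ * (lam 4 1)⁻¹ ∈ N10 := by
    have h : lam 3 5 * lam 4 1 * (lam 3 5)⁻¹ * (lam 4 1)⁻¹ =
        (lam 2 5)⁻¹ * (((lam 2 5 * lam 3 5) * lam 4 1 * (lam 2 5 * lam 3 5)⁻¹ * (lam 4 1)⁻¹) *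
        (lam 2 5 * lam 4 1 * (lam 2 5)⁻¹ * (lam 4 1)⁻¹)⁻¹) * ((lam 2 5)⁻¹)⁻¹ := by group
    rw [h]; exact conj _ (mul_mem hr1 (inv_mem hB)) _
  have hD : lam 3 5 * lam 4 2 * (lam 3 5)⁻¹ * (lam 4 2)⁻¹ ∈ N10 := by
    have h : lam 3 5 * lam 4 2 * (lam 3 5)⁻¹ * (lam 4 2)⁻¹ =
        (lam 3 5 * (lam 4 2 * lam 4 1) * (lam 3 5)⁻¹ * (lam 4 2 * lam 4 1)⁻¹) *
        (lam 4 2 * (lam 3 5 * lam 4 1 * (lam 3 5)⁻¹ * (lam 4 1)⁻¹) * (lam 4 2)⁻¹)⁻¹ := by group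
    rw [h]; exact mul_mem hr0 (inv_mem (conj _ hC _))
  refine ⟨?_, ?_, ?_, ?_⟩ <;> unfold commE
  · have h : (lam 2 5)⁻¹ * (lam 3 1)⁻¹ * lam 2 5 * lam 3 1 =
        (lam 2 5 * lam 3 1)⁻¹ * (lam 2 5 * lam 3 1 * (lam 2 5)⁻¹ * (lam 3 1)⁻¹) *
        ((lam 2 5 * lam 3 1)⁻¹)⁻¹ := by group
    rw [h]; exact conj _ hA _
  · have h : (lam 2 5)⁻¹ * (lam 4 1)⁻¹ * lam 2 5 * lam 4 1 =
        (lam 2 5 * lam 4 1)⁻¹ * (lam 2 5 * lam 4 1 * (lam 2 5)⁻¹ * (lam 4 1)⁻¹) *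
        ((lam 2 5 * lam 4 1)⁻¹)⁻¹ := by group
    rw [h]; exact conj _ hB _
  · have h : (lam 3 5)⁻¹ * (lam 4 1)⁻¹ * lam 3 5 * lam 4 1 =
        (lam 3 5 * lam 4 1)⁻¹ * (lam 3 5 * lam 4 1 * (lam 3 5)⁻¹ * (lam 4 1)⁻¹) *
        ((lam 3 5 * lam 4 1)⁻¹)⁻¹ := by group
    rw [h]; exact conj _ hC _
  · have h : (lam 3 5)⁻¹ * (lam 4 2)⁻¹ * lam 3 5 * lam 4 2 =
        (lam 3 5 * lam 4 2)⁻¹ * (lam 3 5 * lam 4 2 * (lam 3 5)⁻¹ * (lam 4 2)⁻¹) *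
        ((lam 3 5 * lam 4 2)⁻¹)⁻¹ := by group
    rw [h]; exact conj _ hD _
end

section
/- In the free group F_5, the four commutators [λ_{3,5},λ_{2,1}], [λ_{4,5},λ_{2,1}], [λ_{4,5},λ_{3,1}], [λ_{4,5},λ_{3,2}] all lie in the normal closure of the set {S_i(λ_{3,4}λ_{2,1}λ_{3,4}^{-1}λ_{2,1}^{-1}) : i = 0,1,2,3} ∪ CR(4), where S_i : F_4 → F_5 and CR(4) ⊆ F_5 via the canonical inclusion F_4 → F_5. -/
/-- The relator `λ_{3,4} λ_{2,1} λ_{3,4}⁻¹ λ_{2,1}⁻¹` of `F_4`. -/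
def r11 : FG := lam 3 4 * lam 2 1 * (lam 3 4)⁻¹ * (lam 2 1)⁻¹

/-- The normal closure in `F_5` of `{S_i(λ_{3,4}λ_{2,1}λ_{3,4}⁻¹λ_{2,1}⁻¹) : i = 0,1,2,3} ∪ CR(4)`. -/
def N11 : Subgroup FG :=
  Subgroup.normalClosure ({Smap 0 r11, Smap 1 r11, Smap 2 r11, Smap 3 r11} ∪ CR 4)


lemma hnorm : N11.Normal := Subgroup.normalClosure_normal

lemma commE_mem {a b : FG} (h : a * b * a⁻¹ * b⁻¹ ∈ N11) : commE a b ∈ N11 := by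
  have e : commE a b = (a * b)⁻¹ * (a * b * a⁻¹ * b⁻¹) * ((a * b)⁻¹)⁻¹ := by
    simp only [commE]; group
  rw [e]
  exact hnorm.conj_mem _ h _

theorem comms_from_lifting_34_21 :
    commE (lam 3 5) (lam 2 1) ∈ N11 ∧ commE (lam 4 5) (lam 2 1) ∈ N11 ∧
    commE (lam 4 5) (lam 3 1) ∈ N11 ∧ commE (lam 4 5) (lam 3 2) ∈ N11 := by
  have h0 : Smap 0 r11 ∈ N11 := Subgroup.subset_normalClosure (Or.inl (by simp))
  have h1 : Smap 1 r11 ∈ N11 := Subgroup.subset_normalClosure (Or.inl (by simp))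
  have h2 : Smap 2 r11 ∈ N11 := Subgroup.subset_normalClosure (Or.inl (by simp))
  have h3 : Smap 3 r11 ∈ N11 := Subgroup.subset_normalClosure (Or.inl (by simp))
  have hr : r11 ∈ N11 := Subgroup.subset_normalClosure (Or.inr
    ⟨3, 4, 2, 1, by norm_num [r11, CR]⟩)
  have e0 : Smap 0 r11
      = lam 4 5 * (lam 3 2 * lam 3 1) * (lam 4 5)⁻¹ * (lam 3 2 * lam 3 1)⁻¹ := by
    simp [Smap, r11, Sgen, lam]
  have e1 : Smap 1 r11
      = lam 4 5 * (lam 2 1 * lam 3 1) * (lam 4 5)⁻¹ * (lam 2 1 * lam 3 1)⁻¹ := by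
    simp [Smap, r11, Sgen, lam]
  have e2 : Smap 2 r11
      = (lam 3 5 * lam 4 5) * lam 2 1 * (lam 3 5 * lam 4 5)⁻¹ * (lam 2 1)⁻¹ := by
    simp [Smap, r11, Sgen, lam]
  have e3 : Smap 3 r11
      = (lam 3 5 * lam 3 4) * lam 2 1 * (lam 3 5 * lam 3 4)⁻¹ * (lam 2 1)⁻¹ := by
    simp [Smap, r11, Sgen, lam]
  -- A : [λ35, λ21] commutator word
  have hA : lam 3 5 * lam 2 1 * (lam 3 5)⁻¹ * (lam 2 1)⁻¹ ∈ N11 := by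
    have e : lam 3 5 * lam 2 1 * (lam 3 5)⁻¹ * (lam 2 1)⁻¹
        = (lam 3 5 * r11 * (lam 3 5)⁻¹)⁻¹ * Smap 3 r11 := by
      rw [e3]; simp only [r11]; group
    rw [e]
    exact mul_mem (inv_mem (hnorm.conj_mem _ hr _)) h3
  -- B : λ45 λ21 λ45⁻¹ λ21⁻¹
  have hB : lam 4 5 * lam 2 1 * (lam 4 5)⁻¹ * (lam 2 1)⁻¹ ∈ N11 := by
    have hB' : lam 3 5 * (lam 4 5 * lam 2 1 * (lam 4 5)⁻¹ * (lam 2 1)⁻¹) * (lam 3 5)⁻¹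
        ∈ N11 := by
      have e : lam 3 5 * (lam 4 5 * lam 2 1 * (lam 4 5)⁻¹ * (lam 2 1)⁻¹) * (lam 3 5)⁻¹
          = Smap 2 r11 * (lam 3 5 * lam 2 1 * (lam 3 5)⁻¹ * (lam 2 1)⁻¹)⁻¹ := by
        rw [e2]; group
      rw [e]
      exact mul_mem h2 (inv_mem hA)
    have e : lam 4 5 * lam 2 1 * (lam 4 5)⁻¹ * (lam 2 1)⁻¹
        = (lam 3 5)⁻¹ * (lam 3 5 * (lam 4 5 * lam 2 1 * (lam 4 5)⁻¹ * (lam 2 1)⁻¹)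
            * (lam 3 5)⁻¹) * ((lam 3 5)⁻¹)⁻¹ := by group
    rw [e]
    exact hnorm.conj_mem _ hB' _
  -- C : λ45 λ31 λ45⁻¹ λ31⁻¹
  have hC : lam 4 5 * lam 3 1 * (lam 4 5)⁻¹ * (lam 3 1)⁻¹ ∈ N11 := by
    have hC' : lam 2 1 * (lam 4 5 * lam 3 1 * (lam 4 5)⁻¹ * (lam 3 1)⁻¹) * (lam 2 1)⁻¹
        ∈ N11 := by
      have e : lam 2 1 * (lam 4 5 * lam 3 1 * (lam 4 5)⁻¹ * (lam 3 1)⁻¹) * (lam 2 1)⁻¹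
          = (lam 4 5 * lam 2 1 * (lam 4 5)⁻¹ * (lam 2 1)⁻¹)⁻¹ * Smap 1 r11 := by
        rw [e1]; group
      rw [e]
      exact mul_mem (inv_mem hB) h1
    have e : lam 4 5 * lam 3 1 * (lam 4 5)⁻¹ * (lam 3 1)⁻¹
        = (lam 2 1)⁻¹ * (lam 2 1 * (lam 4 5 * lam 3 1 * (lam 4 5)⁻¹ * (lam 3 1)⁻¹)
            * (lam 2 1)⁻¹) * ((lam 2 1)⁻¹)⁻¹ := by group
    rw [e]
    exact hnorm.conj_mem _ hC' _
  -- D : λ45 λ32 λ45⁻¹ λ32⁻¹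
  have hD : lam 4 5 * lam 3 2 * (lam 4 5)⁻¹ * (lam 3 2)⁻¹ ∈ N11 := by
    have e : lam 4 5 * lam 3 2 * (lam 4 5)⁻¹ * (lam 3 2)⁻¹
        = Smap 0 r11 * (lam 3 2 * (lam 4 5 * lam 3 1 * (lam 4 5)⁻¹ * (lam 3 1)⁻¹)
            * (lam 3 2)⁻¹)⁻¹ := by
      rw [e0]; group
    rw [e]
    exact mul_mem h0 (inv_mem (hnorm.conj_mem _ hC _))
  exact ⟨commE_mem hA, commE_mem hB, commE_mem hC, commE_mem hD⟩
end

section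
/- For every n ≥ 4 and all 1 ≤ i < j ≤ n, every relator of the long-relation set R_{i,j,n+1} lies in the normal closure, in F_{n+1}, of the set R^V(n) ∪ ⋃_{l=0}^{n−1} S_l(R^V(n)) ∪ CR(n+1), where R^V(n) ⊆ F_{n+1} via the canonical inclusion F_n → F_{n+1}. -/
section Helpers
variable {G : Type*} [Group G]

lemma swap_ (x u v : G) (h : u*v = v*u) : x*u*v = x*v*u := by
  rw [mul_assoc, h, ← mul_assoc]

lemma tri_ (x : G) {a b c d e f : G} (h : a*b*c = d*e*f) : x*a*b*c = x*d*e*f := by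
  simp only [mul_assoc] at h ⊢
  rw [h]

lemma cancelR {a b c d e f : G} (u v : G) (h : a*b*c*u*v = d*e*f*u*v) : a*b*c = d*e*f :=
  mul_right_cancel (mul_right_cancel h)

lemma cancelL {a b c d e f : G} (u v : G) (h : u*v*a*b*c = u*v*d*e*f) : a*b*c = d*e*f := by
  have h' : (u*v)*(a*b*c) = (u*v)*(d*e*f) := by
    simp only [mul_assoc] at h ⊢; exact h
  exact mul_left_cancel h'

lemma cancelLR {a b c d e f : G} (u v : G) (h : u*a*b*c*v = u*d*e*f*v) : a*b*c = d*e*f := by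
  have h' : u*(a*b*c)*v = u*(d*e*f)*v := by
    simp only [mul_assoc] at h ⊢; exact h
  exact mul_left_cancel (mul_right_cancel h')


lemma rel6 {a b c d e f : G} (h : a*b*c*d⁻¹*e⁻¹*f⁻¹ = 1) : a*b*c = f*e*d := by
  have h2 : a*b*c*(f*e*d)⁻¹ = a*b*c*d⁻¹*e⁻¹*f⁻¹ := by group
  rw [← mul_inv_eq_one, h2]
  exact h

lemma rel4 {a b : G} (h : a*b*a⁻¹*b⁻¹ = 1) : a*b = b*a := by
  have h2 : a*b*(b*a)⁻¹ = a*b*a⁻¹*b⁻¹ := by group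
  rw [← mul_inv_eq_one, h2]
  exact h

-- core A lemmas : triple (i,j,n) -> triple (i,j,n+1)
-- A=λij A'=λji B=λin B'=λni C=λjn C'=λnj D=λi,n+1 D'=λn+1,i E=λj,n+1 E'=λn+1,j

lemma coreA1 {A B C D E : G}
    (r1 : A*B*C = C*B*A) (hBE : B*E = E*B) (hCD : C*D = D*C)
    (s1 : A*D*B*E*C = E*C*D*B*A) :
    A*D*E = E*D*A := by
  refine cancelR B C ?_
  calc A*D*E*B*C = A*D*B*E*C := by rw [swap_ (A*D) E B hBE.symm]
    _ = E*C*D*B*A := s1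
    _ = E*D*C*B*A := by rw [swap_ E C D hCD]
    _ = E*D*A*B*C := tri_ (E*D) r1.symm

lemma coreA2 {A' B C D E : G}
    (r2 : A'*C*B = B*C*A') (hBE : B*E = E*B) (hCD : C*D = D*C)
    (s2 : A'*E*C*D*B = D*B*E*C*A') :
    A'*E*D = D*E*A' := by
  refine cancelR C B ?_
  calc A'*E*D*C*B = A'*E*C*D*B := by rw [swap_ (A'*E) C D hCD]
    _ = D*B*E*C*A' := s2
    _ = D*E*B*C*A' := by rw [swap_ D B E hBE]
    _ = D*E*A'*C*B := tri_ (D*E) r2.symm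

lemma coreA3 {A B C' D E' : G}
    (r3 : B*A*C' = C'*A*B) (hBE' : B*E' = E'*B) (hC'D : C'*D = D*C')
    (s3 : D*B*A*C'*E' = C'*E'*A*D*B) :
    D*A*E' = E'*A*D := by
  refine cancelLR C' B ?_
  calc C'*D*A*E'*B = C'*D*A*B*E' := by rw [swap_ (C'*D*A) E' B hBE'.symm]
    _ = D*C'*A*B*E' := by rw [hC'D]
    _ = D*B*A*C'*E' := by rw [tri_ D r3]
    _ = C'*E'*A*D*B := s3

lemma coreA4 {A B' C' D' E' : G}
    (r4 : B'*C'*A = A*C'*B') (hB'E' : B'*E' = E'*B') (hC'D' : C'*D' = D'*C')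
    (s4 : B'*D'*C'*E'*A = A*C'*E'*B'*D') :
    D'*E'*A = A*E'*D' := by
  refine cancelL B' C' ?_
  calc B'*C'*D'*E'*A = B'*D'*C'*E'*A := by rw [swap_ B' C' D' hC'D']
    _ = A*C'*E'*B'*D' := s4
    _ = A*C'*B'*E'*D' := by rw [swap_ (A*C') E' B' hB'E'.symm]
    _ = B'*C'*A*E'*D' := by rw [← r4]

lemma coreA5 {A' B' C D' E : G}
    (r5 : C*A'*B' = B'*A'*C) (hB'E : B'*E = E*B') (hCD' : C*D' = D'*C)
    (s5 : E*C*A'*B'*D' = B'*D'*A'*E*C) :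
    E*A'*D' = D'*A'*E := by
  refine cancelLR B' C ?_
  calc B'*E*A'*D'*C = E*B'*A'*D'*C := by rw [hB'E]
    _ = E*B'*A'*C*D' := by rw [swap_ (E*B'*A') D' C hCD'.symm]
    _ = E*C*A'*B'*D' := by rw [tri_ E r5]
    _ = B'*D'*A'*E*C := s5

lemma coreA6 {A' B' C' D' E' : G}
    (r6 : C'*B'*A' = A'*B'*C') (hB'E' : B'*E' = E'*B') (hC'D' : C'*D' = D'*C')
    (s6 : C'*E'*B'*D'*A' = A'*B'*D'*C'*E') :
    E'*D'*A' = A'*D'*E' := by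
  refine cancelL C' B' ?_
  calc C'*B'*E'*D'*A' = C'*E'*B'*D'*A' := by rw [swap_ C' B' E' hB'E']
    _ = A'*B'*D'*C'*E' := s6
    _ = A'*B'*C'*D'*E' := by rw [swap_ (A'*B') D' C' hC'D'.symm]
    _ = C'*B'*A'*D'*E' := by rw [← r6]



-- core B lemmas: triple (i,n-1,n) images + triple (i,n-1,n+1) relations -> triple (i,n,n+1)
-- X=λi,n-1 X'=λn-1,i B=λi,n B'=λn,i D=λi,n+1 D'=λn+1,i G=λn-1,n+1 G'=λn+1,n-1 F=λn,n+1 F'=λn+1,n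

lemma coreB1 {B D F X G : G}
    (h1 : X*D*G = G*D*X) (hBG : B*G = G*B) (hXF : X*F = F*X)
    (u1 : B*X*D*G*F = G*F*D*B*X) :
    B*D*F = F*D*B := by
  refine cancelLR G X ?_
  calc G*B*D*F*X = G*B*D*X*F := by rw [swap_ (G*B*D) F X hXF.symm]
    _ = B*G*D*X*F := by rw [← hBG]
    _ = B*X*D*G*F := by rw [tri_ B h1]
    _ = G*F*D*B*X := u1

lemma coreB2 {B' D F X' G : G}
    (h2 : X'*G*D = D*G*X') (hB'G : B'*G = G*B') (hX'F : X'*F = F*X')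
    (u2 : X'*B'*G*F*D = D*G*F*X'*B') :
    B'*F*D = D*F*B' := by
  refine cancelL X' G ?_
  calc X'*G*B'*F*D = X'*B'*G*F*D := by rw [swap_ X' G B' hB'G.symm]
    _ = D*G*F*X'*B' := u2
    _ = D*G*X'*F*B' := by rw [swap_ (D*G) F X' hX'F.symm]
    _ = X'*G*D*F*B' := by rw [← h2]

lemma coreB3 {B D F' X G' : G}
    (h3 : D*X*G' = G'*X*D) (hXF' : X*F' = F'*X) (hBG' : B*G' = G'*B)
    (u3 : D*B*X*F'*G' = F'*G'*B*X*D) :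
    D*B*F' = F'*B*D := by
  refine cancelR X G' ?_
  calc D*B*F'*X*G' = D*B*X*F'*G' := by rw [swap_ (D*B) F' X hXF'.symm]
    _ = F'*G'*B*X*D := u3
    _ = F'*B*G'*X*D := by rw [swap_ F' G' B hBG'.symm]
    _ = F'*B*D*X*G' := by rw [tri_ (F'*B) h3]

lemma coreB4 {B D' F' X G' : G}
    (h4 : D'*G'*X = X*G'*D') (hBG' : B*G' = G'*B) (hXF' : X*F' = F'*X)
    (u4 : D'*F'*G'*B*X = B*X*F'*G'*D') :
    D'*F'*B = B*F'*D' := by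
  refine cancelR G' X ?_
  calc D'*F'*B*G'*X = D'*F'*G'*B*X := by rw [swap_ (D'*F') B G' hBG']
    _ = B*X*F'*G'*D' := u4
    _ = B*F'*X*G'*D' := by rw [swap_ B X F' hXF']
    _ = B*F'*D'*G'*X := by rw [tri_ (B*F') h4]

lemma coreB5 {B' D' F X' G : G}
    (h5 : G*X'*D' = D'*X'*G) (hX'F : X'*F = F*X') (hB'G : B'*G = G*B')
    (u5 : G*F*X'*B'*D' = D'*X'*B'*G*F) :
    F*B'*D' = D'*B'*F := by
  refine cancelL G X' ?_
  calc G*X'*F*B'*D' = G*F*X'*B'*D' := by rw [swap_ G X' F hX'F]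
    _ = D'*X'*B'*G*F := u5
    _ = D'*X'*G*B'*F := by rw [swap_ (D'*X') B' G hB'G]
    _ = G*X'*D'*B'*F := by rw [← h5]

lemma coreB6 {B' D' F' X' G' : G}
    (h6 : G'*D'*X' = X'*D'*G') (hB'G' : B'*G' = G'*B') (hX'F' : X'*F' = F'*X')
    (u6 : F'*G'*D'*X'*B' = X'*B'*D'*F'*G') :
    F'*D'*B' = B'*D'*F' := by
  refine cancelLR X' G' ?_
  calc X'*F'*D'*B'*G' = F'*X'*D'*B'*G' := by rw [hX'F']
    _ = F'*X'*D'*G'*B' := by rw [swap_ (F'*X'*D') B' G' hB'G']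
    _ = F'*G'*D'*X'*B' := by rw [tri_ F' h6]
    _ = X'*B'*D'*F'*G' := u6


lemma Smap_lam (t x y : ℕ) : Smap t (lam x y) = Sgen (t+1) (x, y) := by
  simp [Smap, lam, FreeGroup.lift_apply_of]

lemma Sgen_fix {m a b : ℕ} (ha : a < m) (hb : b < m) : Sgen m (a, b) = lam a b := by
  unfold Sgen
  split_ifs <;> first | rfl | (exfalso; omega)

lemma Sgen_topR {m a : ℕ} (ha : a < m) : Sgen m (a, m) = lam a (m+1) * lam a m := by
  unfold Sgen
  split_ifs <;> first | rfl | (exfalso; omega)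

lemma Sgen_topL {m a : ℕ} (ha : a < m) : Sgen m (m, a) = lam m a * lam (m+1) a := by
  unfold Sgen
  split_ifs <;> first | rfl | (exfalso; omega)

lemma Sgen_overR {m a b : ℕ} (ha : a < m) (hb : m < b) : Sgen m (a, b) = lam a (b+1) := by
  unfold Sgen
  split_ifs <;> first | rfl | (exfalso; omega)

lemma Sgen_overL {m a b : ℕ} (ha : a < m) (hb : m < b) : Sgen m (b, a) = lam (b+1) a := by
  unfold Sgen
  split_ifs <;> first | rfl | (exfalso; omega)

lemma Sgen_splitR {m b : ℕ} (hb : m < b) : Sgen m (m, b) = lam m (b+1) * lam (m+1) (b+1) := by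
  unfold Sgen
  split_ifs <;> first | rfl | (exfalso; omega)

lemma Sgen_splitL {m b : ℕ} (hb : m < b) : Sgen m (b, m) = lam (b+1) (m+1) * lam (b+1) m := by
  unfold Sgen
  split_ifs <;> first | rfl | (exfalso; omega)

lemma Sgen_shift {m a b : ℕ} (ha : m < a) (hb : m < b) (hab : a ≠ b) :
    Sgen m (a, b) = lam (a+1) (b+1) := by
  unfold Sgen
  split_ifs <;> first | rfl | (exfalso; omega)

section Stage
variable {G : Type*} [Group G]

lemma stageA (f : FG →* G) (n i j : ℕ)
    (hn : 4 ≤ n) (hi : 1 ≤ i) (hij : i < j) (hj : j < n)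
    (hlong : ∀ a b c : ℕ, 1 ≤ a → a ≤ n → 1 ≤ b → b ≤ n → 1 ≤ c → c ≤ n →
      a ≠ b → a ≠ c → b ≠ c →
      f (lam c a) * f (lam c b) * f (lam a b) = f (lam a b) * f (lam c b) * f (lam c a))
    (hcomm : ∀ a b c d : ℕ, 1 ≤ a → a ≤ n+1 → 1 ≤ b → b ≤ n+1 → 1 ≤ c → c ≤ n+1 →
      1 ≤ d → d ≤ n+1 → a ≠ b → a ≠ c → a ≠ d → b ≠ c → b ≠ d → c ≠ d →
      f (lam a b) * f (lam c d) = f (lam c d) * f (lam a b))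
    (himg : ∀ t, t < n → ∀ a b c : ℕ, 1 ≤ a → a ≤ n → 1 ≤ b → b ≤ n → 1 ≤ c → c ≤ n →
      a ≠ b → a ≠ c → b ≠ c →
      f (Smap t (lam c a)) * f (Smap t (lam c b)) * f (Smap t (lam a b)) =
      f (Smap t (lam a b)) * f (Smap t (lam c b)) * f (Smap t (lam c a))) :
    (f (lam i j) * f (lam i (n+1)) * f (lam j (n+1))
      = f (lam j (n+1)) * f (lam i (n+1)) * f (lam i j)) ∧
    (f (lam j i) * f (lam j (n+1)) * f (lam i (n+1))
      = f (lam i (n+1)) * f (lam j (n+1)) * f (lam j i)) ∧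
    (f (lam i (n+1)) * f (lam i j) * f (lam (n+1) j)
      = f (lam (n+1) j) * f (lam i j) * f (lam i (n+1))) ∧
    (f (lam (n+1) i) * f (lam (n+1) j) * f (lam i j)
      = f (lam i j) * f (lam (n+1) j) * f (lam (n+1) i)) ∧
    (f (lam j (n+1)) * f (lam j i) * f (lam (n+1) i)
      = f (lam (n+1) i) * f (lam j i) * f (lam j (n+1))) ∧
    (f (lam (n+1) j) * f (lam (n+1) i) * f (lam j i)
      = f (lam j i) * f (lam (n+1) i) * f (lam (n+1) j)) := by
  have hn1 : n - 1 + 1 = n := by omega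
  have ht : n - 1 < n := by omega
  have eA : f (Smap (n-1) (lam i j)) = f (lam i j) := by
    rw [Smap_lam, hn1, Sgen_fix (by omega) (by omega)]
  have eA' : f (Smap (n-1) (lam j i)) = f (lam j i) := by
    rw [Smap_lam, hn1, Sgen_fix (by omega) (by omega)]
  have eB : f (Smap (n-1) (lam i n)) = f (lam i (n+1)) * f (lam i n) := by
    rw [Smap_lam, hn1, Sgen_topR (by omega), map_mul]
  have eB' : f (Smap (n-1) (lam n i)) = f (lam n i) * f (lam (n+1) i) := by
    rw [Smap_lam, hn1, Sgen_topL (by omega), map_mul]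
  have eC : f (Smap (n-1) (lam j n)) = f (lam j (n+1)) * f (lam j n) := by
    rw [Smap_lam, hn1, Sgen_topR (by omega), map_mul]
  have eC' : f (Smap (n-1) (lam n j)) = f (lam n j) * f (lam (n+1) j) := by
    rw [Smap_lam, hn1, Sgen_topL (by omega), map_mul]
  have r1 := hlong j n i (by omega) (by omega) (by omega) (by omega) (by omega) (by omega)
    (by omega) (by omega) (by omega)
  have r2 := hlong i n j (by omega) (by omega) (by omega) (by omega) (by omega) (by omega)
    (by omega) (by omega) (by omega)
  have r3 := hlong n j i (by omega) (by omega) (by omega) (by omega) (by omega) (by omega)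
    (by omega) (by omega) (by omega)
  have r4 := hlong i j n (by omega) (by omega) (by omega) (by omega) (by omega) (by omega)
    (by omega) (by omega) (by omega)
  have r5 := hlong n i j (by omega) (by omega) (by omega) (by omega) (by omega) (by omega)
    (by omega) (by omega) (by omega)
  have r6 := hlong j i n (by omega) (by omega) (by omega) (by omega) (by omega) (by omega)
    (by omega) (by omega) (by omega)
  have hBE : f (lam i n) * f (lam j (n+1)) = f (lam j (n+1)) * f (lam i n) :=
    hcomm i n j (n+1) (by omega) (by omega) (by omega) (by omega) (by omega) (by omega)
      (by omega) (by omega) (by omega) (by omega) (by omega) (by omega) (by omega) (by omega)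
  have hCD : f (lam j n) * f (lam i (n+1)) = f (lam i (n+1)) * f (lam j n) :=
    hcomm j n i (n+1) (by omega) (by omega) (by omega) (by omega) (by omega) (by omega)
      (by omega) (by omega) (by omega) (by omega) (by omega) (by omega) (by omega) (by omega)
  have hBE' : f (lam i n) * f (lam (n+1) j) = f (lam (n+1) j) * f (lam i n) :=
    hcomm i n (n+1) j (by omega) (by omega) (by omega) (by omega) (by omega) (by omega)
      (by omega) (by omega) (by omega) (by omega) (by omega) (by omega) (by omega) (by omega)
  have hC'D : f (lam n j) * f (lam i (n+1)) = f (lam i (n+1)) * f (lam n j) :=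
    hcomm n j i (n+1) (by omega) (by omega) (by omega) (by omega) (by omega) (by omega)
      (by omega) (by omega) (by omega) (by omega) (by omega) (by omega) (by omega) (by omega)
  have hC'D' : f (lam n j) * f (lam (n+1) i) = f (lam (n+1) i) * f (lam n j) :=
    hcomm n j (n+1) i (by omega) (by omega) (by omega) (by omega) (by omega) (by omega)
      (by omega) (by omega) (by omega) (by omega) (by omega) (by omega) (by omega) (by omega)
  have hB'E' : f (lam n i) * f (lam (n+1) j) = f (lam (n+1) j) * f (lam n i) :=
    hcomm n i (n+1) j (by omega) (by omega) (by omega) (by omega) (by omega) (by omega)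
      (by omega) (by omega) (by omega) (by omega) (by omega) (by omega) (by omega) (by omega)
  have hCD' : f (lam j n) * f (lam (n+1) i) = f (lam (n+1) i) * f (lam j n) :=
    hcomm j n (n+1) i (by omega) (by omega) (by omega) (by omega) (by omega) (by omega)
      (by omega) (by omega) (by omega) (by omega) (by omega) (by omega) (by omega) (by omega)
  have hB'E : f (lam n i) * f (lam j (n+1)) = f (lam j (n+1)) * f (lam n i) :=
    hcomm n i j (n+1) (by omega) (by omega) (by omega) (by omega) (by omega) (by omega)
      (by omega) (by omega) (by omega) (by omega) (by omega) (by omega) (by omega) (by omega)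
  have s1 : f (lam i j) * f (lam i (n+1)) * f (lam i n) * f (lam j (n+1)) * f (lam j n)
      = f (lam j (n+1)) * f (lam j n) * f (lam i (n+1)) * f (lam i n) * f (lam i j) := by
    have h := himg (n-1) ht j n i (by omega) (by omega) (by omega) (by omega) (by omega)
      (by omega) (by omega) (by omega) (by omega)
    rw [eA, eB, eC] at h
    simpa only [mul_assoc] using h
  have s2 : f (lam j i) * f (lam j (n+1)) * f (lam j n) * f (lam i (n+1)) * f (lam i n)
      = f (lam i (n+1)) * f (lam i n) * f (lam j (n+1)) * f (lam j n) * f (lam j i) := by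
    have h := himg (n-1) ht i n j (by omega) (by omega) (by omega) (by omega) (by omega)
      (by omega) (by omega) (by omega) (by omega)
    rw [eA', eB, eC] at h
    simpa only [mul_assoc] using h
  have s3 : f (lam i (n+1)) * f (lam i n) * f (lam i j) * f (lam n j) * f (lam (n+1) j)
      = f (lam n j) * f (lam (n+1) j) * f (lam i j) * f (lam i (n+1)) * f (lam i n) := by
    have h := himg (n-1) ht n j i (by omega) (by omega) (by omega) (by omega) (by omega)
      (by omega) (by omega) (by omega) (by omega)
    rw [eA, eB, eC'] at h
    simpa only [mul_assoc] using h
  have s4 : f (lam n i) * f (lam (n+1) i) * f (lam n j) * f (lam (n+1) j) * f (lam i j)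
      = f (lam i j) * f (lam n j) * f (lam (n+1) j) * f (lam n i) * f (lam (n+1) i) := by
    have h := himg (n-1) ht i j n (by omega) (by omega) (by omega) (by omega) (by omega)
      (by omega) (by omega) (by omega) (by omega)
    rw [eA, eB', eC'] at h
    simpa only [mul_assoc] using h
  have s5 : f (lam j (n+1)) * f (lam j n) * f (lam j i) * f (lam n i) * f (lam (n+1) i)
      = f (lam n i) * f (lam (n+1) i) * f (lam j i) * f (lam j (n+1)) * f (lam j n) := by
    have h := himg (n-1) ht n i j (by omega) (by omega) (by omega) (by omega) (by omega)
      (by omega) (by omega) (by omega) (by omega)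
    rw [eA', eB', eC] at h
    simpa only [mul_assoc] using h
  have s6 : f (lam n j) * f (lam (n+1) j) * f (lam n i) * f (lam (n+1) i) * f (lam j i)
      = f (lam j i) * f (lam n i) * f (lam (n+1) i) * f (lam n j) * f (lam (n+1) j) := by
    have h := himg (n-1) ht j i n (by omega) (by omega) (by omega) (by omega) (by omega)
      (by omega) (by omega) (by omega) (by omega)
    rw [eA', eB', eC'] at h
    simpa only [mul_assoc] using h
  refine ⟨?_, ?_, ?_, ?_, ?_, ?_⟩
  · refine coreA1 r1 hBE hCD ?_
    simpa only [mul_assoc] using s1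
  · refine coreA2 r2 hBE hCD ?_
    simpa only [mul_assoc] using s2
  · refine coreA3 r3 hBE' hC'D ?_
    simpa only [mul_assoc] using s3
  · refine coreA4 r4 hB'E' hC'D' ?_
    simpa only [mul_assoc] using s4
  · refine coreA5 r5 hB'E hCD' ?_
    simpa only [mul_assoc] using s5
  · refine coreA6 r6 hB'E' hC'D' ?_
    simpa only [mul_assoc] using s6

lemma stageB (f : FG →* G) (n i : ℕ)
    (hn : 4 ≤ n) (hi : 1 ≤ i) (hin : i < n - 1)
    (hlong : ∀ a b c : ℕ, 1 ≤ a → a ≤ n → 1 ≤ b → b ≤ n → 1 ≤ c → c ≤ n →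
      a ≠ b → a ≠ c → b ≠ c →
      f (lam c a) * f (lam c b) * f (lam a b) = f (lam a b) * f (lam c b) * f (lam c a))
    (hcomm : ∀ a b c d : ℕ, 1 ≤ a → a ≤ n+1 → 1 ≤ b → b ≤ n+1 → 1 ≤ c → c ≤ n+1 →
      1 ≤ d → d ≤ n+1 → a ≠ b → a ≠ c → a ≠ d → b ≠ c → b ≠ d → c ≠ d →
      f (lam a b) * f (lam c d) = f (lam c d) * f (lam a b))
    (himg : ∀ t, t < n → ∀ a b c : ℕ, 1 ≤ a → a ≤ n → 1 ≤ b → b ≤ n → 1 ≤ c → c ≤ n →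
      a ≠ b → a ≠ c → b ≠ c →
      f (Smap t (lam c a)) * f (Smap t (lam c b)) * f (Smap t (lam a b)) =
      f (Smap t (lam a b)) * f (Smap t (lam c b)) * f (Smap t (lam c a))) :
    (f (lam i n) * f (lam i (n+1)) * f (lam n (n+1))
      = f (lam n (n+1)) * f (lam i (n+1)) * f (lam i n)) ∧
    (f (lam n i) * f (lam n (n+1)) * f (lam i (n+1))
      = f (lam i (n+1)) * f (lam n (n+1)) * f (lam n i)) ∧
    (f (lam i (n+1)) * f (lam i n) * f (lam (n+1) n)
      = f (lam (n+1) n) * f (lam i n) * f (lam i (n+1))) ∧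
    (f (lam (n+1) i) * f (lam (n+1) n) * f (lam i n)
      = f (lam i n) * f (lam (n+1) n) * f (lam (n+1) i)) ∧
    (f (lam n (n+1)) * f (lam n i) * f (lam (n+1) i)
      = f (lam (n+1) i) * f (lam n i) * f (lam n (n+1))) ∧
    (f (lam (n+1) n) * f (lam (n+1) i) * f (lam n i)
      = f (lam n i) * f (lam (n+1) i) * f (lam (n+1) n)) := by
  have hn1 : n - 1 + 1 = n := by omega
  have hn2 : n - 2 + 1 = n - 1 := by omega
  have ht : n - 2 < n := by omega
  obtain ⟨st1, st2, st3, st4, st5, st6⟩ :=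
    stageA f n i (n-1) hn hi (by omega) (by omega) hlong hcomm himg
  have eX : f (Smap (n-2) (lam i (n-1))) = f (lam i n) * f (lam i (n-1)) := by
    rw [Smap_lam, hn2, Sgen_topR (show i < n-1 by omega), hn1, map_mul]
  have eX' : f (Smap (n-2) (lam (n-1) i)) = f (lam (n-1) i) * f (lam n i) := by
    rw [Smap_lam, hn2, Sgen_topL (show i < n-1 by omega), hn1, map_mul]
  have eB : f (Smap (n-2) (lam i n)) = f (lam i (n+1)) := by
    rw [Smap_lam, hn2, Sgen_overR (show i < n-1 by omega) (by omega)]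
  have eB' : f (Smap (n-2) (lam n i)) = f (lam (n+1) i) := by
    rw [Smap_lam, hn2, Sgen_overL (show i < n-1 by omega) (by omega)]
  have eY : f (Smap (n-2) (lam (n-1) n)) = f (lam (n-1) (n+1)) * f (lam n (n+1)) := by
    rw [Smap_lam, hn2, Sgen_splitR (show n-1 < n by omega), hn1, map_mul]
  have eY' : f (Smap (n-2) (lam n (n-1))) = f (lam (n+1) n) * f (lam (n+1) (n-1)) := by
    rw [Smap_lam, hn2, Sgen_splitL (show n-1 < n by omega), hn1, map_mul]
  have hBG : f (lam i n) * f (lam (n-1) (n+1)) = f (lam (n-1) (n+1)) * f (lam i n) :=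
    hcomm i n (n-1) (n+1) (by omega) (by omega) (by omega) (by omega) (by omega) (by omega)
      (by omega) (by omega) (by omega) (by omega) (by omega) (by omega) (by omega) (by omega)
  have hXF : f (lam i (n-1)) * f (lam n (n+1)) = f (lam n (n+1)) * f (lam i (n-1)) :=
    hcomm i (n-1) n (n+1) (by omega) (by omega) (by omega) (by omega) (by omega) (by omega)
      (by omega) (by omega) (by omega) (by omega) (by omega) (by omega) (by omega) (by omega)
  have hB'G : f (lam n i) * f (lam (n-1) (n+1)) = f (lam (n-1) (n+1)) * f (lam n i) :=
    hcomm n i (n-1) (n+1) (by omega) (by omega) (by omega) (by omega) (by omega) (by omega)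
      (by omega) (by omega) (by omega) (by omega) (by omega) (by omega) (by omega) (by omega)
  have hX'F : f (lam (n-1) i) * f (lam n (n+1)) = f (lam n (n+1)) * f (lam (n-1) i) :=
    hcomm (n-1) i n (n+1) (by omega) (by omega) (by omega) (by omega) (by omega) (by omega)
      (by omega) (by omega) (by omega) (by omega) (by omega) (by omega) (by omega) (by omega)
  have hXF' : f (lam i (n-1)) * f (lam (n+1) n) = f (lam (n+1) n) * f (lam i (n-1)) :=
    hcomm i (n-1) (n+1) n (by omega) (by omega) (by omega) (by omega) (by omega) (by omega)
      (by omega) (by omega) (by omega) (by omega) (by omega) (by omega) (by omega) (by omega)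
  have hBG' : f (lam i n) * f (lam (n+1) (n-1)) = f (lam (n+1) (n-1)) * f (lam i n) :=
    hcomm i n (n+1) (n-1) (by omega) (by omega) (by omega) (by omega) (by omega) (by omega)
      (by omega) (by omega) (by omega) (by omega) (by omega) (by omega) (by omega) (by omega)
  have hB'G' : f (lam n i) * f (lam (n+1) (n-1)) = f (lam (n+1) (n-1)) * f (lam n i) :=
    hcomm n i (n+1) (n-1) (by omega) (by omega) (by omega) (by omega) (by omega) (by omega)
      (by omega) (by omega) (by omega) (by omega) (by omega) (by omega) (by omega) (by omega)
  have hX'F' : f (lam (n-1) i) * f (lam (n+1) n) = f (lam (n+1) n) * f (lam (n-1) i) :=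
    hcomm (n-1) i (n+1) n (by omega) (by omega) (by omega) (by omega) (by omega) (by omega)
      (by omega) (by omega) (by omega) (by omega) (by omega) (by omega) (by omega) (by omega)
  have u1 : f (lam i n) * f (lam i (n-1)) * f (lam i (n+1)) * f (lam (n-1) (n+1)) * f (lam n (n+1))
      = f (lam (n-1) (n+1)) * f (lam n (n+1)) * f (lam i (n+1)) * f (lam i n) * f (lam i (n-1)) := by
    have h := himg (n-2) ht (n-1) n i (by omega) (by omega) (by omega) (by omega) (by omega)
      (by omega) (by omega) (by omega) (by omega)
    rw [eX, eB, eY] at h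
    simpa only [mul_assoc] using h
  have u2 : f (lam (n-1) i) * f (lam n i) * f (lam (n-1) (n+1)) * f (lam n (n+1)) * f (lam i (n+1))
      = f (lam i (n+1)) * f (lam (n-1) (n+1)) * f (lam n (n+1)) * f (lam (n-1) i) * f (lam n i) := by
    have h := himg (n-2) ht i n (n-1) (by omega) (by omega) (by omega) (by omega) (by omega)
      (by omega) (by omega) (by omega) (by omega)
    rw [eX', eB, eY] at h
    simpa only [mul_assoc] using h
  have u3 : f (lam i (n+1)) * f (lam i n) * f (lam i (n-1)) * f (lam (n+1) n) * f (lam (n+1) (n-1))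
      = f (lam (n+1) n) * f (lam (n+1) (n-1)) * f (lam i n) * f (lam i (n-1)) * f (lam i (n+1)) := by
    have h := himg (n-2) ht n (n-1) i (by omega) (by omega) (by omega) (by omega) (by omega)
      (by omega) (by omega) (by omega) (by omega)
    rw [eX, eB, eY'] at h
    simpa only [mul_assoc] using h
  have u4 : f (lam (n+1) i) * f (lam (n+1) n) * f (lam (n+1) (n-1)) * f (lam i n) * f (lam i (n-1))
      = f (lam i n) * f (lam i (n-1)) * f (lam (n+1) n) * f (lam (n+1) (n-1)) * f (lam (n+1) i) := by
    have h := himg (n-2) ht i (n-1) n (by omega) (by omega) (by omega) (by omega) (by omega)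
      (by omega) (by omega) (by omega) (by omega)
    rw [eX, eB', eY'] at h
    simpa only [mul_assoc] using h
  have u5 : f (lam (n-1) (n+1)) * f (lam n (n+1)) * f (lam (n-1) i) * f (lam n i) * f (lam (n+1) i)
      = f (lam (n+1) i) * f (lam (n-1) i) * f (lam n i) * f (lam (n-1) (n+1)) * f (lam n (n+1)) := by
    have h := himg (n-2) ht n i (n-1) (by omega) (by omega) (by omega) (by omega) (by omega)
      (by omega) (by omega) (by omega) (by omega)
    rw [eX', eB', eY] at h
    simpa only [mul_assoc] using h
  have u6 : f (lam (n+1) n) * f (lam (n+1) (n-1)) * f (lam (n+1) i) * f (lam (n-1) i) * f (lam n i)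
      = f (lam (n-1) i) * f (lam n i) * f (lam (n+1) i) * f (lam (n+1) n) * f (lam (n+1) (n-1)) := by
    have h := himg (n-2) ht (n-1) i n (by omega) (by omega) (by omega) (by omega) (by omega)
      (by omega) (by omega) (by omega) (by omega)
    rw [eX', eB', eY'] at h
    simpa only [mul_assoc] using h
  refine ⟨?_, ?_, ?_, ?_, ?_, ?_⟩
  · refine coreB1 st1 hBG hXF ?_
    simpa only [mul_assoc] using u1
  · refine coreB2 st2 hB'G hX'F ?_
    simpa only [mul_assoc] using u2
  · refine coreB3 st3 hXF' hBG' ?_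
    simpa only [mul_assoc] using u3
  · refine coreB4 st4 hBG' hXF' ?_
    simpa only [mul_assoc] using u4
  · refine coreB5 st5 hX'F hB'G ?_
    simpa only [mul_assoc] using u5
  · refine coreB6 st6 hB'G' hX'F' ?_
    simpa only [mul_assoc] using u6

end Stage

lemma shift_mem (m : ℕ) (hm : 2 ≤ m) :
    Rtriple (m+1) (m+2) (m+3) ⊆ ⋃ l ∈ Finset.range (m+2), (Smap l) '' (RV (m+2)) := by
  have E : ∀ x y : ℕ, 2 ≤ x → 2 ≤ y → x ≠ y → Smap 0 (lam x y) = lam (x+1) (y+1) := by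
    intro x y hx hy hxy
    rw [Smap_lam, Sgen_shift (by omega) (by omega) hxy]
  have E1 := E m (m+1) (by omega) (by omega) (by omega)
  have E2 := E m (m+2) (by omega) (by omega) (by omega)
  have E3 := E (m+1) (m+2) (by omega) (by omega) (by omega)
  have E4 := E (m+1) m (by omega) (by omega) (by omega)
  have E5 := E (m+2) m (by omega) (by omega) (by omega)
  have E6 := E (m+2) (m+1) (by omega) (by omega) (by omega)
  have r12 : m+1+1 = m+2 := rfl
  have r23 : m+2+1 = m+3 := rfl
  intro w hw
  simp only [Rtriple, Set.mem_insert_iff, Set.mem_singleton_iff] at hw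
  have hr : (0:ℕ) ∈ Finset.range (m+2) := Finset.mem_range.mpr (by omega)
  rcases hw with rfl | rfl | rfl | rfl | rfl | rfl
  · refine Set.mem_iUnion₂.mpr ⟨0, hr,
      lam m (m+1) * lam m (m+2) * lam (m+1) (m+2) *
        (lam m (m+1))⁻¹ * (lam m (m+2))⁻¹ * (lam (m+1) (m+2))⁻¹,
      Set.mem_union_right _ ⟨m+1, m+2, m, by omega, by omega, by omega, by omega, by omega,
        by omega, by omega, by omega, by omega, rfl⟩, ?_⟩
    simp only [map_mul, map_inv, E1, E2, E3, r12, r23, relOf]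
    group
  · refine Set.mem_iUnion₂.mpr ⟨0, hr,
      lam (m+1) m * lam (m+1) (m+2) * lam m (m+2) *
        (lam (m+1) m)⁻¹ * (lam (m+1) (m+2))⁻¹ * (lam m (m+2))⁻¹,
      Set.mem_union_right _ ⟨m, m+2, m+1, by omega, by omega, by omega, by omega, by omega,
        by omega, by omega, by omega, by omega, rfl⟩, ?_⟩
    simp only [map_mul, map_inv, E2, E3, E4, r12, r23, relOf]
    group
  · refine Set.mem_iUnion₂.mpr ⟨0, hr,
      lam m (m+2) * lam m (m+1) * lam (m+2) (m+1) *
        (lam m (m+2))⁻¹ * (lam m (m+1))⁻¹ * (lam (m+2) (m+1))⁻¹,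
      Set.mem_union_right _ ⟨m+2, m+1, m, by omega, by omega, by omega, by omega, by omega,
        by omega, by omega, by omega, by omega, rfl⟩, ?_⟩
    simp only [map_mul, map_inv, E1, E2, E6, r12, r23, relOf]
    group
  · refine Set.mem_iUnion₂.mpr ⟨0, hr,
      lam (m+2) m * lam (m+2) (m+1) * lam m (m+1) *
        (lam (m+2) m)⁻¹ * (lam (m+2) (m+1))⁻¹ * (lam m (m+1))⁻¹,
      Set.mem_union_right _ ⟨m, m+1, m+2, by omega, by omega, by omega, by omega, by omega,
        by omega, by omega, by omega, by omega, rfl⟩, ?_⟩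
    simp only [map_mul, map_inv, E1, E5, E6, r12, r23, relOf]
    group
  · refine Set.mem_iUnion₂.mpr ⟨0, hr,
      lam (m+1) (m+2) * lam (m+1) m * lam (m+2) m *
        (lam (m+1) (m+2))⁻¹ * (lam (m+1) m)⁻¹ * (lam (m+2) m)⁻¹,
      Set.mem_union_right _ ⟨m+2, m, m+1, by omega, by omega, by omega, by omega, by omega,
        by omega, by omega, by omega, by omega, rfl⟩, ?_⟩
    simp only [map_mul, map_inv, E3, E4, E5, r12, r23, relOf]
    group
  · refine Set.mem_iUnion₂.mpr ⟨0, hr,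
      lam (m+2) (m+1) * lam (m+2) m * lam (m+1) m *
        (lam (m+2) (m+1))⁻¹ * (lam (m+2) m)⁻¹ * (lam (m+1) m)⁻¹,
      Set.mem_union_right _ ⟨m+1, m, m+2, by omega, by omega, by omega, by omega, by omega,
        by omega, by omega, by omega, by omega, rfl⟩, ?_⟩
    simp only [map_mul, map_inv, E4, E5, E6, r12, r23, relOf]
    group

/-- for every `n ≥ 4` and all `1 ≤ i < j ≤ n`, every relator of the
long-relation set `R_{i,j,n+1}` lies in the normal closure in `F_{n+1}` of
`R^V(n) ∪ ⋃_{l=0}^{n-1} S_l(R^V(n)) ∪ CR(n+1)`. -/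
theorem long_relations_lift (n i j : ℕ) (hn : 4 ≤ n) (hi : 1 ≤ i) (hij : i < j)
    (hj : j ≤ n) :
    Rtriple i j (n + 1) ⊆
      (Subgroup.normalClosure
        (RV n ∪ (⋃ l ∈ Finset.range n, (Smap l) '' (RV n)) ∪ CR (n + 1)) : Set FG) := by
  set St : Set FG := RV n ∪ (⋃ l ∈ Finset.range n, (Smap l) '' (RV n)) ∪ CR (n + 1) with hSt
  let f : FG →* FG ⧸ Subgroup.normalClosure St := QuotientGroup.mk' (Subgroup.normalClosure St)
  have hone : ∀ g ∈ St, f g = 1 := fun g hg =>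
    (QuotientGroup.eq_one_iff g).mpr (Subgroup.subset_normalClosure hg)
  have hmemN : ∀ x : FG, f x = 1 → x ∈ Subgroup.normalClosure St := fun x hx =>
    (QuotientGroup.eq_one_iff x).mp hx
  have hlong : ∀ a b c : ℕ, 1 ≤ a → a ≤ n → 1 ≤ b → b ≤ n → 1 ≤ c → c ≤ n →
      a ≠ b → a ≠ c → b ≠ c →
      f (lam c a) * f (lam c b) * f (lam a b) = f (lam a b) * f (lam c b) * f (lam c a) := by
    intro a b c ha1 ha2 hb1 hb2 hc1 hc2 hab hac hbc
    have hmem : (lam c a * lam c b * lam a b * (lam c a)⁻¹ * (lam c b)⁻¹ * (lam a b)⁻¹) ∈ St :=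
      Set.mem_union_left _ (Set.mem_union_left _ (Set.mem_union_right _
        ⟨a, b, c, ha1, ha2, hb1, hb2, hc1, hc2, hab, hac, hbc, rfl⟩))
    have h1 := hone _ hmem
    simp only [map_mul, map_inv] at h1
    exact rel6 h1
  have hcomm : ∀ a b c d : ℕ, 1 ≤ a → a ≤ n+1 → 1 ≤ b → b ≤ n+1 → 1 ≤ c → c ≤ n+1 →
      1 ≤ d → d ≤ n+1 → a ≠ b → a ≠ c → a ≠ d → b ≠ c → b ≠ d → c ≠ d →
      f (lam a b) * f (lam c d) = f (lam c d) * f (lam a b) := by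
    intro a b c d ha1 ha2 hb1 hb2 hc1 hc2 hd1 hd2 hab hac had hbc hbd hcd
    have hmem : (lam a b * lam c d * (lam a b)⁻¹ * (lam c d)⁻¹) ∈ St :=
      Set.mem_union_right _
        ⟨a, b, c, d, ha1, ha2, hb1, hb2, hc1, hc2, hd1, hd2, hab, hac, had, hbc, hbd, hcd, rfl⟩
    have h1 := hone _ hmem
    simp only [map_mul, map_inv] at h1
    exact rel4 h1
  have himg : ∀ t, t < n → ∀ a b c : ℕ, 1 ≤ a → a ≤ n → 1 ≤ b → b ≤ n → 1 ≤ c → c ≤ n →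
      a ≠ b → a ≠ c → b ≠ c →
      f (Smap t (lam c a)) * f (Smap t (lam c b)) * f (Smap t (lam a b)) =
      f (Smap t (lam a b)) * f (Smap t (lam c b)) * f (Smap t (lam c a)) := by
    intro t ht a b c ha1 ha2 hb1 hb2 hc1 hc2 hab hac hbc
    have hRV : (lam c a * lam c b * lam a b * (lam c a)⁻¹ * (lam c b)⁻¹ * (lam a b)⁻¹) ∈ RV n :=
      Set.mem_union_right _ ⟨a, b, c, ha1, ha2, hb1, hb2, hc1, hc2, hab, hac, hbc, rfl⟩
    have hmem : Smap t
        (lam c a * lam c b * lam a b * (lam c a)⁻¹ * (lam c b)⁻¹ * (lam a b)⁻¹) ∈ St :=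
      Set.mem_union_left _ (Set.mem_union_right _
        (Set.mem_iUnion₂.mpr ⟨t, Finset.mem_range.mpr ht, _, hRV, rfl⟩))
    have h1 := hone _ hmem
    simp only [map_mul, map_inv] at h1
    exact rel6 h1
  intro w hw
  rcases Nat.lt_or_ge j n with hjn | hjn
  · obtain ⟨g1, g2, g3, g4, g5, g6⟩ := stageA f n i j hn hi hij hjn hlong hcomm himg
    simp only [Rtriple, Set.mem_insert_iff, Set.mem_singleton_iff] at hw
    rcases hw with rfl | rfl | rfl | rfl | rfl | rfl
    · exact hmemN _ (by simp only [relOf, map_mul, map_inv]; rw [mul_inv_eq_one]; exact g1)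
    · exact hmemN _ (by simp only [relOf, map_mul, map_inv]; rw [mul_inv_eq_one]; exact g2)
    · exact hmemN _ (by simp only [relOf, map_mul, map_inv]; rw [mul_inv_eq_one]; exact g3)
    · exact hmemN _ (by simp only [relOf, map_mul, map_inv]; rw [mul_inv_eq_one]; exact g4)
    · exact hmemN _ (by simp only [relOf, map_mul, map_inv]; rw [mul_inv_eq_one]; exact g5)
    · exact hmemN _ (by simp only [relOf, map_mul, map_inv]; rw [mul_inv_eq_one]; exact g6)
  · have hj' : j = n := by omega
    rw [hj'] at hw
    rcases Nat.lt_or_ge i (n-1) with hin | hin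
    · obtain ⟨g1, g2, g3, g4, g5, g6⟩ := stageB f n i hn hi hin hlong hcomm himg
      simp only [Rtriple, Set.mem_insert_iff, Set.mem_singleton_iff] at hw
      rcases hw with rfl | rfl | rfl | rfl | rfl | rfl
      · exact hmemN _ (by simp only [relOf, map_mul, map_inv]; rw [mul_inv_eq_one]; exact g1)
      · exact hmemN _ (by simp only [relOf, map_mul, map_inv]; rw [mul_inv_eq_one]; exact g2)
      · exact hmemN _ (by simp only [relOf, map_mul, map_inv]; rw [mul_inv_eq_one]; exact g3)
      · exact hmemN _ (by simp only [relOf, map_mul, map_inv]; rw [mul_inv_eq_one]; exact g4)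
      · exact hmemN _ (by simp only [relOf, map_mul, map_inv]; rw [mul_inv_eq_one]; exact g5)
      · exact hmemN _ (by simp only [relOf, map_mul, map_inv]; rw [mul_inv_eq_one]; exact g6)
    · have hii : i = n - 1 := by omega
      rw [hii] at hw
      have hsub := shift_mem (n-2) (by omega)
      have e1 : n-2+1 = n-1 := by omega
      have e2 : n-2+2 = n := by omega
      have e3 : n-2+3 = n+1 := by omega
      rw [e1, e2, e3] at hsub
      exact Subgroup.subset_normalClosure
        (Set.mem_union_left _ (Set.mem_union_right _ (hsub hw)))
end Helpers
end

section
/- Let n ≥ 4 and 2 < j ≤ n. Then every relator of the long-relation set R_{2,j,n+1} lies in the normal closure, in F_{n+1}, of the set S_0(R_{1,j−1,n}) ∪ R_{1,j,n+1} ∪ CR(n+1), where S_0 : F_n → F_{n+1}. -/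
private lemma swapF {G : Type*} [Group G] {a b : G} (h : a * b = b * a) (t : G) :
    a * (b * t) = b * (a * t) := by rw [← mul_assoc, h, mul_assoc]

private lemma triF {G : Type*} [Group G] {a b c : G} (h : a * (b * c) = c * (b * a)) (t : G) :
    a * (b * (c * t)) = c * (b * (a * t)) := by
  rw [← mul_assoc, ← mul_assoc, mul_assoc a b c, h, mul_assoc, mul_assoc]

private lemma six_rel {G : Type*} [Group G]
    (x1 x2 y1 y2 c c' p q r s : G)
    (A1 : x1*(y1*c) = c*(y1*x1))
    (A2 : q*(c*y1) = y1*(c*q))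
    (A3 : y1*(x1*c') = c'*(x1*y1))
    (A4 : s*(c'*x1) = x1*(c'*s))
    (A5 : c*(q*s) = s*(q*c))
    (A6 : c'*(s*q) = q*(s*c'))
    (B1 : x1*(x2*(y1*(y2*c))) = c*(y1*(y2*(x1*x2))))
    (B2 : p*(q*(c*(y1*y2))) = y1*(y2*(c*(p*q))))
    (B3 : y1*(y2*(x1*(x2*c'))) = c'*(x1*(x2*(y1*y2))))
    (B4 : r*(s*(c'*(x1*x2))) = x1*(x2*(c'*(r*s))))
    (B5 : c*(p*(q*(r*s))) = r*(s*(p*(q*c))))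
    (B6 : c'*(r*(s*(p*q))) = p*(q*(r*(s*c'))))
    (C1 : x1*y2 = y2*x1) (C2 : x2*y1 = y1*x2) (C3 : q*y2 = y2*q)
    (C4 : p*y1 = y1*p) (C5 : s*x2 = x2*s) (C6 : r*x1 = x1*r)
    (C7 : q*r = r*q) (C8 : p*s = s*p) :
    (x2*(y2*c) = c*(y2*x2)) ∧ (p*(c*y2) = y2*(c*p)) ∧ (y2*(x2*c') = c'*(x2*y2)) ∧
    (r*(c'*x2) = x2*(c'*r)) ∧ (c*(p*r) = r*(p*c)) ∧ (c'*(r*p) = p*(r*c')) := by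
  refine ⟨?_, ?_, ?_, ?_, ?_, ?_⟩
  · have e : x1*(y1*(x2*(y2*c))) = x1*(y1*(c*(y2*x2))) := by
      rw [← swapF C2, B1, ← swapF C1, ← triF A1]
    exact mul_left_cancel (mul_left_cancel e)
  · have e := B2
    rw [triF A2, C3, swapF C4] at e
    have e2 := mul_left_cancel e
    have e3 : p*(c*y2)*q = y2*(c*p)*q := by simp only [mul_assoc]; exact e2
    exact mul_right_cancel e3
  · have e := B3
    rw [← swapF C1, swapF C2, ← triF A3] at e
    exact mul_left_cancel (mul_left_cancel e)
  · have e := B4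
    rw [triF A4, C5, swapF C6] at e
    have e2 := mul_left_cancel e
    have e3 : r*(c'*x2)*s = x2*(c'*r)*s := by simp only [mul_assoc]; exact e2
    exact mul_right_cancel e3
  · have e := B5
    rw [swapF C7, ← swapF C8, ← A5] at e
    have e3 : c*(p*r)*(q*s) = r*(p*c)*(q*s) := by simp only [mul_assoc]; exact e
    exact mul_right_cancel e3
  · have e := B6
    rw [← swapF C8, swapF C7, ← A6] at e
    have e3 : c'*(r*p)*(s*q) = p*(r*c')*(s*q) := by simp only [mul_assoc]; exact e
    exact mul_right_cancel e3

/-- for `n ≥ 4` and `2 < j ≤ n`, every relator of `R_{2,j,n+1}` lies in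
the normal closure in `F_{n+1}` of `S_0(R_{1,j-1,n}) ∪ R_{1,j,n+1} ∪ CR(n+1)`. -/
theorem R_2_j_lift (n j : ℕ) (hn : 4 ≤ n) (hj2 : 2 < j) (hj : j ≤ n) :
    Rtriple 2 j (n + 1) ⊆
      (Subgroup.normalClosure
        ((Smap 0) '' (Rtriple 1 (j - 1) n) ∪ Rtriple 1 j (n + 1) ∪ CR (n + 1))
        : Set FG) := by
  classical
  set S : Set FG :=
    (Smap 0) '' (Rtriple 1 (j - 1) n) ∪ Rtriple 1 j (n + 1) ∪ CR (n + 1) with hSdef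
  set N : Subgroup FG := Subgroup.normalClosure S with hNdef
  -- everything in S dies in the quotient
  have hone : ∀ w ∈ S, (QuotientGroup.mk w : FG ⧸ N) = 1 := fun w hw =>
    (QuotientGroup.eq_one_iff w).2 (Subgroup.subset_normalClosure hw)
  have hrel : ∀ u v : FG, relOf u v ∈ S →
      (QuotientGroup.mk u : FG ⧸ N) = QuotientGroup.mk v := by
    intro u v h
    have h2 := hone _ h
    rw [relOf, QuotientGroup.mk_mul, QuotientGroup.mk_inv, mul_inv_eq_one] at h2
    exact h2
  have memRT : ∀ u v : FG, (QuotientGroup.mk u : FG ⧸ N) = QuotientGroup.mk v →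
      relOf u v ∈ (N : Set FG) := by
    intro u v h
    have h2 : (QuotientGroup.mk (relOf u v) : FG ⧸ N) = 1 := by
      rw [relOf, QuotientGroup.mk_mul, QuotientGroup.mk_inv, h, mul_inv_cancel]
    exact (QuotientGroup.eq_one_iff _).1 h2
  -- relations from R_{1,j,n+1}
  have hrelA : ∀ u v : FG, relOf u v ∈ Rtriple 1 j (n + 1) →
      (QuotientGroup.mk u : FG ⧸ N) = QuotientGroup.mk v := fun u v h =>
    hrel u v (Set.mem_union_left _ (Set.mem_union_right _ h))
  -- relations from S_0(R_{1,j-1,n})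
  have hrelB : ∀ u v : FG, relOf u v ∈ Rtriple 1 (j - 1) n →
      (QuotientGroup.mk (Smap 0 u) : FG ⧸ N) = QuotientGroup.mk (Smap 0 v) := by
    intro u v h
    have hm : Smap 0 (relOf u v) ∈ S :=
      Set.mem_union_left _ (Set.mem_union_left _ ⟨_, h, rfl⟩)
    rw [relOf, map_mul, map_inv] at hm
    exact hrel _ _ hm
  -- commutation relations from CR(n+1)
  have hcomm : ∀ a b c d : ℕ, 1 ≤ a → a ≤ n+1 → 1 ≤ b → b ≤ n+1 →
      1 ≤ c → c ≤ n+1 → 1 ≤ d → d ≤ n+1 →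
      a ≠ b → a ≠ c → a ≠ d → b ≠ c → b ≠ d → c ≠ d →
      (QuotientGroup.mk (lam a b) : FG ⧸ N) * QuotientGroup.mk (lam c d)
        = QuotientGroup.mk (lam c d) * QuotientGroup.mk (lam a b) := by
    intro a b c d ha1 ha2 hb1 hb2 hc1 hc2 hd1 hd2 d1 d2 d3 d4 d5 d6
    have hm : lam a b * lam c d * (lam a b)⁻¹ * (lam c d)⁻¹ ∈ S :=
      Set.mem_union_right _
        ⟨a, b, c, d, ha1, ha2, hb1, hb2, hc1, hc2, hd1, hd2, d1, d2, d3, d4, d5, d6, rfl⟩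
    have h2 := hone _ hm
    rw [QuotientGroup.mk_mul, QuotientGroup.mk_mul, QuotientGroup.mk_inv,
      QuotientGroup.mk_inv, mul_assoc, ← mul_inv_rev, mul_inv_eq_one] at h2
    exact h2
  -- evaluation of S_0 on the relevant generators
  have e1 : 1 < j - 1 := by omega
  have e2 : 1 < n := by omega
  have e3 : j - 1 < n := by omega
  have e4 : ¬ (j - 1 < 1) := by omega
  have e5 : ¬ (n < 1) := by omega
  have e6 : ¬ (n < j - 1) := by omega
  have ej1 : j - 1 + 1 = j := by omega
  have hS1 : Smap 0 (lam 1 (j-1)) = lam 1 j * lam 2 j := by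
    simp [Smap, FreeGroup.lift_apply_of, Sgen, lam, e1, ej1]
  have hS2 : Smap 0 (lam (j-1) 1) = lam j 2 * lam j 1 := by
    simp [Smap, FreeGroup.lift_apply_of, Sgen, lam, e1, e4, ej1]
  have hS3 : Smap 0 (lam 1 n) = lam 1 (n+1) * lam 2 (n+1) := by
    simp [Smap, FreeGroup.lift_apply_of, Sgen, lam, e2]
  have hS4 : Smap 0 (lam n 1) = lam (n+1) 2 * lam (n+1) 1 := by
    simp [Smap, FreeGroup.lift_apply_of, Sgen, lam, e2, e5]
  have hS5 : Smap 0 (lam (j-1) n) = lam j (n+1) := by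
    simp [Smap, FreeGroup.lift_apply_of, Sgen, lam, e1, e3, ej1]
  have hS6 : Smap 0 (lam n (j-1)) = lam (n+1) j := by
    simp [Smap, FreeGroup.lift_apply_of, Sgen, lam, e1, e3, e6, ej1]
  -- the ten quotient generators
  -- A relations
  have A1 := hrelA (lam 1 j * lam 1 (n+1) * lam j (n+1))
      (lam j (n+1) * lam 1 (n+1) * lam 1 j) (by simp [Rtriple])
  have A2 := hrelA (lam j 1 * lam j (n+1) * lam 1 (n+1))
      (lam 1 (n+1) * lam j (n+1) * lam j 1) (by simp [Rtriple])
  have A3 := hrelA (lam 1 (n+1) * lam 1 j * lam (n+1) j)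
      (lam (n+1) j * lam 1 j * lam 1 (n+1)) (by simp [Rtriple])
  have A4 := hrelA (lam (n+1) 1 * lam (n+1) j * lam 1 j)
      (lam 1 j * lam (n+1) j * lam (n+1) 1) (by simp [Rtriple])
  have A5 := hrelA (lam j (n+1) * lam j 1 * lam (n+1) 1)
      (lam (n+1) 1 * lam j 1 * lam j (n+1)) (by simp [Rtriple])
  have A6 := hrelA (lam (n+1) j * lam (n+1) 1 * lam j 1)
      (lam j 1 * lam (n+1) 1 * lam (n+1) j) (by simp [Rtriple])
  simp only [QuotientGroup.mk_mul, mul_assoc] at A1 A2 A3 A4 A5 A6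
  -- B relations
  have B1 := hrelB (lam 1 (j-1) * lam 1 n * lam (j-1) n)
      (lam (j-1) n * lam 1 n * lam 1 (j-1)) (by simp [Rtriple])
  have B2 := hrelB (lam (j-1) 1 * lam (j-1) n * lam 1 n)
      (lam 1 n * lam (j-1) n * lam (j-1) 1) (by simp [Rtriple])
  have B3 := hrelB (lam 1 n * lam 1 (j-1) * lam n (j-1))
      (lam n (j-1) * lam 1 (j-1) * lam 1 n) (by simp [Rtriple])
  have B4 := hrelB (lam n 1 * lam n (j-1) * lam 1 (j-1))
      (lam 1 (j-1) * lam n (j-1) * lam n 1) (by simp [Rtriple])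
  have B5 := hrelB (lam (j-1) n * lam (j-1) 1 * lam n 1)
      (lam n 1 * lam (j-1) 1 * lam (j-1) n) (by simp [Rtriple])
  have B6 := hrelB (lam n (j-1) * lam n 1 * lam (j-1) 1)
      (lam (j-1) 1 * lam n 1 * lam n (j-1)) (by simp [Rtriple])
  simp only [map_mul, hS1, hS2, hS3, hS4, hS5, hS6,
    QuotientGroup.mk_mul, mul_assoc] at B1 B2 B3 B4 B5 B6
  -- C relations
  have C1 := hcomm 1 j 2 (n+1) (by omega) (by omega) (by omega) (by omega)
    (by omega) (by omega) (by omega) (by omega)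
    (by omega) (by omega) (by omega) (by omega) (by omega) (by omega)
  have C2 := hcomm 2 j 1 (n+1) (by omega) (by omega) (by omega) (by omega)
    (by omega) (by omega) (by omega) (by omega)
    (by omega) (by omega) (by omega) (by omega) (by omega) (by omega)
  have C3 := hcomm j 1 2 (n+1) (by omega) (by omega) (by omega) (by omega)
    (by omega) (by omega) (by omega) (by omega)
    (by omega) (by omega) (by omega) (by omega) (by omega) (by omega)
  have C4 := hcomm j 2 1 (n+1) (by omega) (by omega) (by omega) (by omega)
    (by omega) (by omega) (by omega) (by omega)
    (by omega) (by omega) (by omega) (by omega) (by omega) (by omega)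
  have C5 := hcomm (n+1) 1 2 j (by omega) (by omega) (by omega) (by omega)
    (by omega) (by omega) (by omega) (by omega)
    (by omega) (by omega) (by omega) (by omega) (by omega) (by omega)
  have C6 := hcomm (n+1) 2 1 j (by omega) (by omega) (by omega) (by omega)
    (by omega) (by omega) (by omega) (by omega)
    (by omega) (by omega) (by omega) (by omega) (by omega) (by omega)
  have C7 := hcomm j 1 (n+1) 2 (by omega) (by omega) (by omega) (by omega)
    (by omega) (by omega) (by omega) (by omega)
    (by omega) (by omega) (by omega) (by omega) (by omega) (by omega)
  have C8 := hcomm j 2 (n+1) 1 (by omega) (by omega) (by omega) (by omega)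
    (by omega) (by omega) (by omega) (by omega)
    (by omega) (by omega) (by omega) (by omega) (by omega) (by omega)
  obtain ⟨T1, T2, T3, T4, T5, T6⟩ := six_rel
    (QuotientGroup.mk (lam 1 j) : FG ⧸ N) (QuotientGroup.mk (lam 2 j))
    (QuotientGroup.mk (lam 1 (n+1))) (QuotientGroup.mk (lam 2 (n+1)))
    (QuotientGroup.mk (lam j (n+1))) (QuotientGroup.mk (lam (n+1) j))
    (QuotientGroup.mk (lam j 2)) (QuotientGroup.mk (lam j 1))
    (QuotientGroup.mk (lam (n+1) 2)) (QuotientGroup.mk (lam (n+1) 1))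
    A1 A2 A3 A4 A5 A6 B1 B2 B3 B4 B5 B6 C1 C2 C3 C4 C5 C6 C7 C8
  intro w hw
  simp only [Rtriple, Set.mem_insert_iff, Set.mem_singleton_iff] at hw
  rcases hw with rfl | rfl | rfl | rfl | rfl | rfl <;>
    refine memRT _ _ ?_ <;>
    simp only [QuotientGroup.mk_mul, mul_assoc]
  · exact T1
  · exact T2
  · exact T3
  · exact T4
  · exact T5
  · exact T6
end

section
/- In the free group F_4, the relator set R^V(4) decomposes as the disjoint union R^V(4) = R^V(3) ⊔ π_1·R^V(3) ⊔ π_2·R^V(3) ⊔ π_3·R^V(3) ⊔ CR(4), where π_1 = τ_3, π_2 = τ_2∘τ_3, π_3 = τ_1∘τ_2∘τ_3 are permutations of {1,2,3,4} built from the transpositions τ_k = (k, k+1), each permutation σ acts on F_4 via the automorphism sending λ_{i,j} to λ_{σ(i),σ(j)}, and R^V(3) ⊆ F_4 via the canonical inclusion F_3 → F_4. -/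
/- ## auxiliary lemmas -/

def longw (i j k : ℕ) : FG :=
  lam k i * lam k j * lam i j * (lam k i)⁻¹ * (lam k j)⁻¹ * (lam i j)⁻¹

def comw (i j k l : ℕ) : FG := lam i j * lam k l * (lam i j)⁻¹ * (lam k l)⁻¹

def tf (a b c : ℕ) : Finset FG :=
  {longw a b c, longw a c b, longw b a c, longw b c a, longw c a b, longw c b a}

def crF : Finset FG :=
  {comw 1 2 3 4, comw 1 2 4 3, comw 1 3 2 4, comw 1 3 4 2, comw 1 4 2 3, comw 1 4 3 2,
   comw 2 1 3 4, comw 2 1 4 3, comw 2 3 1 4, comw 2 3 4 1, comw 2 4 1 3, comw 2 4 3 1,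
   comw 3 1 2 4, comw 3 1 4 2, comw 3 2 1 4, comw 3 2 4 1, comw 3 4 1 2, comw 3 4 2 1,
   comw 4 1 2 3, comw 4 1 3 2, comw 4 2 1 3, comw 4 2 3 1, comw 4 3 1 2, comw 4 3 2 1}

lemma CR3_empty : CR 3 = ∅ := by
  ext w; simp only [CR, Set.mem_setOf_eq, Set.mem_empty_iff_false, iff_false]
  rintro ⟨i, j, k, l, h⟩; omega

lemma mem_LongR {m i j k : ℕ}
    (h : 1 ≤ i ∧ i ≤ m ∧ 1 ≤ j ∧ j ≤ m ∧ 1 ≤ k ∧ k ≤ m ∧ i ≠ j ∧ i ≠ k ∧ j ≠ k) :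
    longw i j k ∈ LongR m :=
  ⟨i, j, k, h.1, h.2.1, h.2.2.1, h.2.2.2.1, h.2.2.2.2.1, h.2.2.2.2.2.1,
    h.2.2.2.2.2.2.1, h.2.2.2.2.2.2.2.1, h.2.2.2.2.2.2.2.2, rfl⟩

lemma mem_CR {m i j k l : ℕ}
    (h : 1 ≤ i ∧ i ≤ m ∧ 1 ≤ j ∧ j ≤ m ∧ 1 ≤ k ∧ k ≤ m ∧ 1 ≤ l ∧ l ≤ m ∧
      i ≠ j ∧ i ≠ k ∧ i ≠ l ∧ j ≠ k ∧ j ≠ l ∧ k ≠ l) :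
    comw i j k l ∈ CR m :=
  ⟨i, j, k, l, h.1, h.2.1, h.2.2.1, h.2.2.2.1, h.2.2.2.2.1, h.2.2.2.2.2.1,
    h.2.2.2.2.2.2.1, h.2.2.2.2.2.2.2.1, h.2.2.2.2.2.2.2.2.1, h.2.2.2.2.2.2.2.2.2.1,
    h.2.2.2.2.2.2.2.2.2.2.1, h.2.2.2.2.2.2.2.2.2.2.2.1,
    h.2.2.2.2.2.2.2.2.2.2.2.2.1, h.2.2.2.2.2.2.2.2.2.2.2.2.2, rfl⟩

lemma LongR3_eq : LongR 3 = ↑(tf 1 2 3) := by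
  ext w
  constructor
  · rintro ⟨i, j, k, hi1, hi2, hj1, hj2, hk1, hk2, hij, hik, hjk, rfl⟩
    interval_cases i <;> interval_cases j <;> interval_cases k <;>
      first | omega | (rw [Finset.mem_coe]; decide)
  · intro hw
    simp only [tf, Finset.coe_insert, Finset.coe_singleton, Set.mem_insert_iff,
      Set.mem_singleton_iff] at hw
    rcases hw with rfl | rfl | rfl | rfl | rfl | rfl <;> exact mem_LongR (by omega)

lemma RV3_eq : RV 3 = ↑(tf 1 2 3) := by
  rw [RV, CR3_empty, Set.empty_union, LongR3_eq]

lemma LongR4_eq : LongR 4 = ↑(tf 1 2 3 ∪ tf 1 2 4 ∪ tf 1 3 4 ∪ tf 2 3 4) := by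
  ext w
  constructor
  · rintro ⟨i, j, k, hi1, hi2, hj1, hj2, hk1, hk2, hij, hik, hjk, rfl⟩
    interval_cases i <;> interval_cases j <;> interval_cases k <;>
      first | omega | (rw [Finset.mem_coe]; decide)
  · intro hw
    simp only [tf, Finset.coe_union, Finset.coe_insert, Finset.coe_singleton,
      Set.mem_union, Set.mem_insert_iff, Set.mem_singleton_iff] at hw
    rcases hw with ((h | h) | h) | h <;>
      rcases h with rfl | rfl | rfl | rfl | rfl | rfl <;> exact mem_LongR (by omega)

lemma CR4_eq : CR 4 = ↑crF := by
  ext w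
  constructor
  · rintro ⟨i, j, k, l, hi1, hi2, hj1, hj2, hk1, hk2, hl1, hl2,
      h1, h2, h3, h4, h5, h6, rfl⟩
    interval_cases i <;> interval_cases j <;> interval_cases k <;> interval_cases l <;>
      first | omega | (rw [Finset.mem_coe]; decide)
  · intro hw
    simp only [crF, Finset.coe_insert, Finset.coe_singleton, Set.mem_insert_iff,
      Set.mem_singleton_iff] at hw
    rcases hw with rfl | rfl | rfl | rfl | rfl | rfl | rfl | rfl | rfl | rfl | rfl | rfl |
      rfl | rfl | rfl | rfl | rfl | rfl | rfl | rfl | rfl | rfl | rfl | rfl <;>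
      exact mem_CR (by omega)

lemma permF_lam (σ : Equiv.Perm ℕ) (a b : ℕ) : permF σ (lam a b) = lam (σ a) (σ b) := by
  simp [permF, lam, FreeGroup.lift_apply_of]

lemma permF_longw (σ : Equiv.Perm ℕ) (i j k : ℕ) :
    permF σ (longw i j k) = longw (σ i) (σ j) (σ k) := by
  simp only [longw, map_mul, map_inv, permF_lam]

lemma image_eq (σ : Equiv.Perm ℕ) (a b c : ℕ)
    (ha : σ 1 = a) (hb : σ 2 = b) (hc : σ 3 = c) :
    permF σ '' RV 3 = ↑(tf a b c) := by
  rw [RV3_eq]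
  simp only [tf, Finset.coe_insert, Finset.coe_singleton, Set.image_insert_eq,
    Set.image_singleton, permF_longw, ha, hb, hc]

lemma pi1_eval : (Equiv.swap 3 4 : Equiv.Perm ℕ) 1 = 1 ∧ (Equiv.swap 3 4 : Equiv.Perm ℕ) 2 = 2 ∧
    (Equiv.swap 3 4 : Equiv.Perm ℕ) 3 = 4 := by
  norm_num [Equiv.swap_apply_def]

lemma pi2_eval : (Equiv.swap 2 3 * Equiv.swap 3 4 : Equiv.Perm ℕ) 1 = 1 ∧
    (Equiv.swap 2 3 * Equiv.swap 3 4 : Equiv.Perm ℕ) 2 = 3 ∧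
    (Equiv.swap 2 3 * Equiv.swap 3 4 : Equiv.Perm ℕ) 3 = 4 := by
  norm_num [Equiv.Perm.mul_apply, Equiv.swap_apply_def]

lemma pi3_eval : (Equiv.swap 1 2 * Equiv.swap 2 3 * Equiv.swap 3 4 : Equiv.Perm ℕ) 1 = 2 ∧
    (Equiv.swap 1 2 * Equiv.swap 2 3 * Equiv.swap 3 4 : Equiv.Perm ℕ) 2 = 3 ∧
    (Equiv.swap 1 2 * Equiv.swap 2 3 * Equiv.swap 3 4 : Equiv.Perm ℕ) 3 = 4 := by
  norm_num [Equiv.Perm.mul_apply, Equiv.swap_apply_def]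

lemma img1 : permF (Equiv.swap 3 4) '' RV 3 = ↑(tf 1 2 4) :=
  image_eq _ _ _ _ pi1_eval.1 pi1_eval.2.1 pi1_eval.2.2

lemma img2 : permF (Equiv.swap 2 3 * Equiv.swap 3 4) '' RV 3 = ↑(tf 1 3 4) :=
  image_eq _ _ _ _ pi2_eval.1 pi2_eval.2.1 pi2_eval.2.2

lemma img3 : permF (Equiv.swap 1 2 * Equiv.swap 2 3 * Equiv.swap 3 4) '' RV 3 = ↑(tf 2 3 4) :=
  image_eq _ _ _ _ pi3_eval.1 pi3_eval.2.1 pi3_eval.2.2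


set_option maxRecDepth 20000 in
/-- with `τ_k = (k,k+1)`, `π₁ = τ₃`, `π₂ = τ₂∘τ₃`, `π₃ = τ₁∘τ₂∘τ₃`
(acting on `F_4` by `λ_{i,j} ↦ λ_{σ(i),σ(j)}`), the relator set `R^V(4)` is the
disjoint union `R^V(3) ⊔ π₁·R^V(3) ⊔ π₂·R^V(3) ⊔ π₃·R^V(3) ⊔ CR(4)`. -/
theorem RV4_decomposition :
    RV 4 = RV 3 ∪ (permF (Equiv.swap 3 4)) '' (RV 3)
        ∪ (permF (Equiv.swap 2 3 * Equiv.swap 3 4)) '' (RV 3)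
        ∪ (permF (Equiv.swap 1 2 * Equiv.swap 2 3 * Equiv.swap 3 4)) '' (RV 3)
        ∪ CR 4 ∧
    List.Pairwise Disjoint
      ([RV 3, (permF (Equiv.swap 3 4)) '' (RV 3),
        (permF (Equiv.swap 2 3 * Equiv.swap 3 4)) '' (RV 3),
        (permF (Equiv.swap 1 2 * Equiv.swap 2 3 * Equiv.swap 3 4)) '' (RV 3),
        CR 4] : List (Set FG)) := by
  constructor
  · rw [RV, CR4_eq, LongR4_eq, img1, img2, img3, RV3_eq, ← Finset.coe_union,
      ← Finset.coe_union, ← Finset.coe_union, ← Finset.coe_union, ← Finset.coe_union,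
      Finset.coe_inj]
    decide
  · rw [img1, img2, img3, RV3_eq, CR4_eq]
    have h : List.Pairwise (Disjoint (α := Finset FG))
        [tf 1 2 3, tf 1 2 4, tf 1 3 4, tf 2 3 4, crF] := by decide
    have := h.map (f := ((↑·) : Finset FG → Set FG))
      (fun _ _ hab => Finset.disjoint_coe.mpr hab)
    simpa using this
end

section
/- For every n ≥ 4, the relator set R^V(n+1) ⊆ F_{n+1} equals the union ⋃_{k=0}^{n} π_k·R^V(n), where π_0 is the identity permutation of {1,…,n+1}, π_k = τ_{n−k+1}∘τ_{n−k+2}∘⋯∘τ_n for 1 ≤ k ≤ n with τ_j the transposition (j, j+1), each permutation σ acts on F_{n+1} via the automorphism sending λ_{i,j} to λ_{σ(i),σ(j)}, and R^V(n) ⊆ F_{n+1} via the canonical inclusion F_n → F_{n+1}. (These π_k are the coset representatives of S_n in S_{n+1}, so the defining relations of VP_{n+1} are obtained from those of VP_n by conjugating by the elements ρ_n, ρ_nρ_{n−1}, …, ρ_nρ_{n−1}⋯ρ_1 of VB_{n+1}.) -/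
/-- The transposition `τ_j = (j, j+1)`. -/
def tau (j : ℕ) : Equiv.Perm ℕ := Equiv.swap j (j + 1)

/-- The coset representatives `π_0 = id`, `π_k = τ_{n-k+1} ∘ τ_{n-k+2} ∘ ⋯ ∘ τ_n`
(the rightmost transposition `τ_n` being applied first). -/
def pil (n : ℕ) : ℕ → Equiv.Perm ℕ
  | 0 => 1
  | k + 1 => tau (n - k) * pil n k

lemma pil_apply (n k x : ℕ) (hk : k ≤ n) (hx : x ≤ n) :
    pil n k x = if n - k < x then x + 1 else x := by
  induction k with
  | zero =>
    show (1 : Equiv.Perm ℕ) x = _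
    rw [Equiv.Perm.one_apply, if_neg (by omega)]
  | succ k ih =>
    have hk' : k ≤ n := by omega
    show (tau (n - k) * pil n k) x = _
    rw [Equiv.Perm.mul_apply, ih hk']
    unfold tau
    by_cases h1 : n - k < x
    · rw [if_pos h1, if_pos (by omega)]
      apply Equiv.swap_apply_of_ne_of_ne <;> omega
    · rw [if_neg h1]
      by_cases h2 : x = n - k
      · rw [if_pos (by omega), h2, Equiv.swap_apply_left]
      · rw [if_neg (by omega)]
        apply Equiv.swap_apply_of_ne_of_ne <;> omega

lemma pil_bounds (n k x : ℕ) (hk : k ≤ n) (h1 : 1 ≤ x) (h2 : x ≤ n) :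
    1 ≤ pil n k x ∧ pil n k x ≤ n + 1 := by
  rw [pil_apply n k x hk h2]
  split <;> omega

lemma pil_ne (n k : ℕ) {a b : ℕ} (h : a ≠ b) : pil n k a ≠ pil n k b :=
  fun he => h ((pil n k).injective he)

lemma exists_preim (n k i : ℕ) (hk : k ≤ n) (h1 : 1 ≤ i) (h2 : i ≤ n + 1)
    (hne : i ≠ n + 1 - k) : ∃ i', 1 ≤ i' ∧ i' ≤ n ∧ pil n k i' = i := by
  by_cases h : i ≤ n - k
  · exact ⟨i, h1, by omega, by rw [pil_apply n k i hk (by omega), if_neg (by omega)]⟩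
  · refine ⟨i - 1, by omega, by omega, ?_⟩
    rw [pil_apply n k (i - 1) hk (by omega), if_pos (by omega)]
    omega

lemma exists_avoid (n i j k l : ℕ) (hn : 4 ≤ n) :
    ∃ m, 1 ≤ m ∧ m ≤ n + 1 ∧ m ≠ i ∧ m ≠ j ∧ m ≠ k ∧ m ≠ l := by
  by_contra h
  push_neg at h
  have key : ∀ m, 1 ≤ m → m ≤ n + 1 → m = i ∨ m = j ∨ m = k ∨ m = l := by
    intro m hm1 hm2
    by_contra hc
    push_neg at hc
    exact hc.2.2.2 (h m hm1 hm2 hc.1 hc.2.1 hc.2.2.1)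
  have hsub : ({1, 2, 3, 4, 5} : Finset ℕ) ⊆ {i, j, k, l} := by
    intro x hx
    simp only [Finset.mem_insert, Finset.mem_singleton] at hx ⊢
    rcases hx with rfl | rfl | rfl | rfl | rfl <;> exact key _ (by omega) (by omega)
  have h5 : (5 : ℕ) ≤ ({i, j, k, l} : Finset ℕ).card := by
    calc (5 : ℕ) = ({1, 2, 3, 4, 5} : Finset ℕ).card := by decide
    _ ≤ _ := Finset.card_le_card hsub
  have h4 : ({i, j, k, l} : Finset ℕ).card ≤ 4 := by
    apply le_trans (Finset.card_insert_le _ _)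
    apply Nat.succ_le_succ
    apply le_trans (Finset.card_insert_le _ _)
    apply Nat.succ_le_succ
    apply le_trans (Finset.card_insert_le _ _)
    simp
  omega

/-- for every `n ≥ 4`, `R^V(n+1) = ⋃_{k=0}^{n} π_k · R^V(n)`, where
each permutation acts on `F_{n+1}` by `λ_{i,j} ↦ λ_{σ(i),σ(j)}`. -/
theorem RV_succ_decomposition (n : ℕ) (hn : 4 ≤ n) :
    RV (n + 1) = ⋃ k ∈ Finset.range (n + 1), (permF (pil n k)) '' (RV n) := by
  ext w
  simp only [Set.mem_iUnion, Finset.mem_range, Nat.lt_succ_iff]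
  constructor
  · rintro (⟨i, j, k, l, hi1, hi2, hj1, hj2, hk1, hk2, hl1, hl2,
      hij, hik, hil, hjk, hjl, hkl, hw⟩ |
      ⟨i, j, k, hi1, hi2, hj1, hj2, hk1, hk2, hij, hik, hjk, hw⟩)
    · obtain ⟨m, hm1, hm2, hmi, hmj, hmk, hml⟩ := exists_avoid n i j k l hn
      refine ⟨n + 1 - m, by omega, ?_⟩
      have hκ : n + 1 - m ≤ n := by omega
      obtain ⟨i', hi'1, hi'2, hi'⟩ := exists_preim n _ i hκ hi1 hi2 (by omega)
      obtain ⟨j', hj'1, hj'2, hj'⟩ := exists_preim n _ j hκ hj1 hj2 (by omega)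
      obtain ⟨k', hk'1, hk'2, hk'⟩ := exists_preim n _ k hκ hk1 hk2 (by omega)
      obtain ⟨l', hl'1, hl'2, hl'⟩ := exists_preim n _ l hκ hl1 hl2 (by omega)
      refine ⟨lam i' j' * lam k' l' * (lam i' j')⁻¹ * (lam k' l')⁻¹,
        Or.inl ⟨i', j', k', l', hi'1, hi'2, hj'1, hj'2, hk'1, hk'2, hl'1, hl'2,
          ?_, ?_, ?_, ?_, ?_, ?_, rfl⟩, ?_⟩
      · exact fun h => hij (by rw [← hi', ← hj', h])
      · exact fun h => hik (by rw [← hi', ← hk', h])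
      · exact fun h => hil (by rw [← hi', ← hl', h])
      · exact fun h => hjk (by rw [← hj', ← hk', h])
      · exact fun h => hjl (by rw [← hj', ← hl', h])
      · exact fun h => hkl (by rw [← hk', ← hl', h])
      · simp only [map_mul, map_inv, permF_lam, hi', hj', hk', hl', hw]
    · obtain ⟨m, hm1, hm2, hmi, hmj, hmk, _⟩ := exists_avoid n i j k k hn
      refine ⟨n + 1 - m, by omega, ?_⟩
      have hκ : n + 1 - m ≤ n := by omega
      obtain ⟨i', hi'1, hi'2, hi'⟩ := exists_preim n _ i hκ hi1 hi2 (by omega)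
      obtain ⟨j', hj'1, hj'2, hj'⟩ := exists_preim n _ j hκ hj1 hj2 (by omega)
      obtain ⟨k', hk'1, hk'2, hk'⟩ := exists_preim n _ k hκ hk1 hk2 (by omega)
      refine ⟨lam k' i' * lam k' j' * lam i' j' * (lam k' i')⁻¹ * (lam k' j')⁻¹ *
          (lam i' j')⁻¹,
        Or.inr ⟨i', j', k', hi'1, hi'2, hj'1, hj'2, hk'1, hk'2, ?_, ?_, ?_, rfl⟩, ?_⟩
      · exact fun h => hij (by rw [← hi', ← hj', h])
      · exact fun h => hik (by rw [← hi', ← hk', h])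
      · exact fun h => hjk (by rw [← hj', ← hk', h])
      · simp only [map_mul, map_inv, permF_lam, hi', hj', hk', hw]
  · rintro ⟨k, hk, w', (⟨a, b, c, d, ha1, ha2, hb1, hb2, hc1, hc2, hd1, hd2,
      hab, hac, had, hbc, hbd, hcd, hw'⟩ |
      ⟨a, b, c, ha1, ha2, hb1, hb2, hc1, hc2, hab, hac, hbc, hw'⟩), hmap⟩
    · refine Or.inl ⟨pil n k a, pil n k b, pil n k c, pil n k d,
        (pil_bounds n k a hk ha1 ha2).1, (pil_bounds n k a hk ha1 ha2).2,
        (pil_bounds n k b hk hb1 hb2).1, (pil_bounds n k b hk hb1 hb2).2,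
        (pil_bounds n k c hk hc1 hc2).1, (pil_bounds n k c hk hc1 hc2).2,
        (pil_bounds n k d hk hd1 hd2).1, (pil_bounds n k d hk hd1 hd2).2,
        pil_ne n k hab, pil_ne n k hac, pil_ne n k had,
        pil_ne n k hbc, pil_ne n k hbd, pil_ne n k hcd, ?_⟩
      rw [← hmap, hw']
      simp only [map_mul, map_inv, permF_lam]
    · refine Or.inr ⟨pil n k a, pil n k b, pil n k c,
        (pil_bounds n k a hk ha1 ha2).1, (pil_bounds n k a hk ha1 ha2).2,
        (pil_bounds n k b hk hb1 hb2).1, (pil_bounds n k b hk hb1 hb2).2,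
        (pil_bounds n k c hk hc1 hc2).1, (pil_bounds n k c hk hc1 hc2).2,
        pil_ne n k hab, pil_ne n k hac, pil_ne n k hbc, ?_⟩
      rw [← hmap, hw']
      simp only [map_mul, map_inv, permF_lam]
end
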